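/- arXiv:1004.0742 — 10 statements merged into one kernel-verified Lean document; each statement's English description precedes it below -/
import Mathlib

section
/- Let A and B be commutative rings equipped with submultiplicative norms |·|_A and |·|_B, and let φ : A → B be an injective ring homomorphism with |φ(a)|_B = |a|_A for all a ∈ A. Suppose φ(A) admits an orthogonal complement in B, i.e., there exists an additive subgroup C of B, stable under multiplication by φ(A), such that every b ∈ B can be written uniquely as b = φ(a) + c with a ∈ A, c ∈ C, and |φ(a) + c|_B = max(|φ(a)|_B, |c|_B) for all a ∈ A, c ∈ C. Then for every multiplicative seminorm α on A bounded above by |·|_A there exists a multiplicative seminorm β on B bounded above by |·|_B with β ∘ φ = α. -/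
open scoped NNReal

/-- A multiplicative (nonarchimedean) seminorm on a commutative ring. -/
def IsMultSeminorm {A : Type*} [CommRing A] (α : A → ℝ≥0) : Prop :=
  α 0 = 0 ∧ (∀ g h : A, α (g - h) ≤ max (α g) (α h)) ∧
    α 1 = 1 ∧ ∀ g h : A, α (g * h) = α g * α h

/-- A submultiplicative (nonarchimedean) norm on a commutative ring. -/
def IsSubmultNorm {A : Type*} [CommRing A] (ν : A → ℝ≥0) : Prop :=
  (∀ g : A, ν g = 0 ↔ g = 0) ∧ (∀ g h : A, ν (g - h) ≤ max (ν g) (ν h)) ∧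
    ν 1 = 1 ∧ ∀ g h : A, ν (g * h) ≤ ν g * ν h


section UM
variable {B : Type*} [CommRing B] (F : B → ℝ≥0)

lemma um_neg (h0 : F 0 = 0) (hu : ∀ g h : B, F (g - h) ≤ max (F g) (F h)) (x : B) :
    F (-x) = F x := by
  have h1 : ∀ y : B, F (-y) ≤ F y := fun y => by
    have := hu 0 y; simpa [h0] using this
  refine le_antisymm (h1 x) ?_
  simpa using h1 (-x)

lemma um_add (h0 : F 0 = 0) (hu : ∀ g h : B, F (g - h) ≤ max (F g) (F h)) (x y : B) :
    F (x + y) ≤ max (F x) (F y) := by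
  have := hu x (-y)
  rw [um_neg F h0 hu y] at this
  simpa [sub_neg_eq_add] using this

lemma um_list_sum (h0 : F 0 = 0) (hu : ∀ g h : B, F (g - h) ≤ max (F g) (F h))
    (l : List B) (t : ℝ≥0) (h : ∀ x ∈ l, F x ≤ t) : F l.sum ≤ t := by
  induction l with
  | nil => simpa [h0] using (zero_le t)
  | cons a l ih =>
      simp only [List.sum_cons]
      refine le_trans (um_add F h0 hu a l.sum) (max_le (h a (by simp)) (ih ?_))
      exact fun x hx => h x (by simp [hx])

lemma um_finset_sum {ι : Type*} (h0 : F 0 = 0) (hu : ∀ g h : B, F (g - h) ≤ max (F g) (F h))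
    (s : Finset ι) (f : ι → B) (t : ℝ≥0) (h : ∀ i ∈ s, F (f i) ≤ t) :
    F (∑ i ∈ s, f i) ≤ t := by
  classical
  induction s using Finset.induction_on with
  | empty => simpa [h0] using (zero_le t)
  | @insert a s' hnot ih =>
      rw [Finset.sum_insert hnot]
      refine le_trans (um_add F h0 hu _ _) (max_le (h a (by simp)) (ih ?_))
      exact fun i hi => h i (by simp [hi])

lemma um_natmul (h0 : F 0 = 0) (hu : ∀ g h : B, F (g - h) ≤ max (F g) (F h))
    (x : B) (n : ℕ) : F (x * (n : B)) ≤ F x := by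
  induction n with
  | zero => simp [h0]
  | succ n ih =>
      push_cast
      rw [mul_add, mul_one]
      exact le_trans (um_add F h0 hu _ _) (max_le ih le_rfl)

lemma sm_pow (h1 : F 1 = 1) (hm : ∀ g h : B, F (g * h) ≤ F g * F h) (x : B) (n : ℕ) :
    F (x ^ n) ≤ F x ^ n := by
  induction n with
  | zero => simp [h1]
  | succ n ih =>
      rw [pow_succ, pow_succ]
      exact le_trans (hm _ _) (mul_le_mul_left ih _)

end UM

section NN

lemma nnciInf_le {ι : Sort*} (f : ι → ℝ≥0) (i : ι) : (⨅ j, f j) ≤ f i :=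
  ciInf_le (OrderBot.bddBelow _) i

lemma nn_mul_iInf {ι : Sort*} [Nonempty ι] (c : ℝ≥0) (f : ι → ℝ≥0) :
    c * ⨅ i, f i = ⨅ i, c * f i := by
  rcases eq_or_ne c 0 with rfl | hc
  · simp
  refine le_antisymm (le_ciInf fun i => mul_le_mul_right (nnciInf_le f i) c) ?_
  have h : (⨅ i, c * f i) / c ≤ ⨅ i, f i := by
    refine le_ciInf fun i => ?_
    rw [div_le_iff₀ (zero_lt_iff.2 hc)]
    rw [mul_comm]
    exact nnciInf_le _ i
  calc (⨅ i, c * f i) = c * ((⨅ i, c * f i) / c) := by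
        rw [mul_div_cancel₀ _ hc]
    _ ≤ c * ⨅ i, f i := mul_le_mul_right h c

lemma nn_le_mul_iInf {ι κ : Sort*} [Nonempty ι] [Nonempty κ] {z : ℝ≥0}
    {x : ι → ℝ≥0} {y : κ → ℝ≥0} (h : ∀ i j, z ≤ x i * y j) :
    z ≤ (⨅ i, x i) * (⨅ j, y j) := by
  have h1 : ∀ i, z ≤ x i * ⨅ j, y j := fun i => by
    rw [nn_mul_iInf]; exact le_ciInf fun j => h i j
  rw [mul_comm, nn_mul_iInf]
  exact le_ciInf fun i => by rw [mul_comm]; exact h1 i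

lemma foldr_max_le (l : List ℝ≥0) (t : ℝ≥0) (h : ∀ x ∈ l, x ≤ t) : l.foldr max 0 ≤ t := by
  induction l with
  | nil => simp
  | cons a l ih => simp only [List.foldr_cons]
                   exact max_le (h a (by simp)) (ih fun x hx => h x (by simp [hx]))

lemma le_foldr_max (l : List ℝ≥0) (x : ℝ≥0) (hx : x ∈ l) : x ≤ l.foldr max 0 := by
  induction l with
  | nil => simp at hx
  | cons a l ih =>
      rcases List.mem_cons.1 hx with rfl | hx
      · exact le_max_left _ _
      · exact le_trans (ih hx) (le_max_right _ _)

lemma foldr_max_append (l₁ l₂ : List ℝ≥0) :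
    (l₁ ++ l₂).foldr max 0 = max (l₁.foldr max 0) (l₂.foldr max 0) := by
  induction l₁ with
  | nil => simp
  | cons a l ih => simp [ih, max_assoc]

lemma nn_mul_max (c x y : ℝ≥0) : c * max x y = max (c * x) (c * y) := by
  rcases le_total x y with h | h
  · rw [max_eq_right h, max_eq_right (mul_le_mul_right h c)]
  · rw [max_eq_left h, max_eq_left (mul_le_mul_right h c)]

lemma foldr_max_map_mul (c : ℝ≥0) (l : List ℝ≥0) :
    (l.map (fun x => c * x)).foldr max 0 = c * l.foldr max 0 := by
  induction l with
  | nil => simp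
  | cons a l ih => simp [ih, nn_mul_max]

end NN

lemma nn_rpow_inv_pow (x : ℝ≥0) (n : ℕ) : (x ^ (((n : ℝ) + 1)⁻¹)) ^ (n + 1) = x := by
  have hn : ((n : ℝ) + 1) ≠ 0 := by positivity
  rw [← NNReal.rpow_natCast (x ^ (((n : ℝ) + 1)⁻¹)) (n + 1), ← NNReal.rpow_mul]
  push_cast
  rw [inv_mul_cancel₀ hn, NNReal.rpow_one]

lemma nn_pow_rpow_inv (x : ℝ≥0) (n : ℕ) : (x ^ (n + 1)) ^ (((n : ℝ) + 1)⁻¹) = x := by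
  have hn : ((n : ℝ) + 1) ≠ 0 := by positivity
  rw [← NNReal.rpow_natCast x (n + 1), ← NNReal.rpow_mul]
  push_cast
  rw [mul_inv_cancel₀ hn, NNReal.rpow_one]

noncomputable def spec {B : Type*} [CommRing B] (γ : B → ℝ≥0) (b : B) : ℝ≥0 :=
  ⨅ n : ℕ, γ (b ^ (n + 1)) ^ (((n : ℝ) + 1)⁻¹)

section Spec
variable {B : Type*} [CommRing B] (γ : B → ℝ≥0)

lemma nnciInf_le' {ι : Sort*} (f : ι → ℝ≥0) (i : ι) : (⨅ j, f j) ≤ f i :=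
  ciInf_le (OrderBot.bddBelow _) i

lemma spec_le (b : B) (n : ℕ) : spec γ b ≤ γ (b ^ (n + 1)) ^ (((n : ℝ) + 1)⁻¹) :=
  nnciInf_le' _ n

lemma spec_le' (b : B) (N : ℕ) (hN : 1 ≤ N) : spec γ b ≤ γ (b ^ N) ^ ((N : ℝ))⁻¹ := by
  have h := spec_le γ b (N - 1)
  have e : N - 1 + 1 = N := Nat.succ_pred_eq_of_pos hN
  rw [e] at h
  have e2 : ((N - 1 : ℕ) : ℝ) + 1 = (N : ℝ) := by
    have : ((N - 1 : ℕ) : ℝ) = (N : ℝ) - 1 := by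
      push_cast [Nat.cast_sub hN]; ring
    rw [this]; ring
  rwa [e2] at h

lemma spec_le_self (b : B) : spec γ b ≤ γ b := by
  have := spec_le γ b 0
  simpa using this

lemma spec_zero (h0 : γ 0 = 0) : spec γ (0 : B) = 0 :=
  le_antisymm (le_trans (spec_le_self γ 0) (le_of_eq h0)) zero_le

lemma spec_one (h1 : γ 1 = 1) : spec γ (1 : B) = 1 := by
  unfold spec
  simp [h1]

lemma pow_le_of_rpow_lt {x t : ℝ≥0} {n : ℕ} (h : x ^ (((n : ℝ) + 1)⁻¹) < t) :
    x < t ^ (n + 1) := by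
  have := pow_lt_pow_left₀ h zero_le (by omega : n + 1 ≠ 0)
  rwa [nn_rpow_inv_pow] at this

lemma spec_submul (h1 : γ 1 = 1) (hm : ∀ g h : B, γ (g * h) ≤ γ g * γ h) (g h : B) :
    spec γ (g * h) ≤ spec γ g * spec γ h := by
  refine nn_le_mul_iInf (fun n m => ?_)
  have hN : 1 ≤ (n + 1) * (m + 1) := Nat.one_le_iff_ne_zero.2 (by positivity)
  refine le_trans (spec_le' γ _ _ hN) ?_
  have key : γ ((g * h) ^ ((n + 1) * (m + 1))) ≤
      γ (g ^ (n + 1)) ^ (m + 1) * γ (h ^ (m + 1)) ^ (n + 1) := by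
    rw [mul_pow]
    refine le_trans (hm _ _) (mul_le_mul' ?_ ?_)
    · rw [pow_mul]
      exact sm_pow γ h1 hm _ _
    · rw [mul_comm (n+1), pow_mul]
      exact sm_pow γ h1 hm _ _
  have hmono := NNReal.rpow_le_rpow key (by positivity : (0:ℝ) ≤ (((n + 1) * (m + 1) : ℕ) : ℝ)⁻¹)
  refine le_trans hmono ?_
  rw [NNReal.mul_rpow]
  refine mul_le_mul' (le_of_eq ?_) (le_of_eq ?_)
  · rw [← NNReal.rpow_natCast (γ (g ^ (n+1))) (m+1), ← NNReal.rpow_mul]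
    congr 1
    push_cast
    field_simp
  · rw [← NNReal.rpow_natCast (γ (h ^ (m+1))) (n+1), ← NNReal.rpow_mul]
    congr 1
    push_cast
    field_simp

end Spec

section SpecUltra
variable {B : Type*} [CommRing B] (γ : B → ℝ≥0)

lemma spec_ultra (h0 : γ 0 = 0) (hu : ∀ g h : B, γ (g - h) ≤ max (γ g) (γ h))
    (h1 : γ 1 = 1) (hm : ∀ g h : B, γ (g * h) ≤ γ g * γ h) (g h : B) :
    spec γ (g - h) ≤ max (spec γ g) (spec γ h) := by
  set Mx := max (spec γ g) (spec γ h) with hMx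
  by_contra hcon
  push_neg at hcon
  obtain ⟨s, hs1, hs2⟩ := exists_between hcon
  obtain ⟨t, ht1, ht2⟩ := exists_between hs1
  have ht0 : 0 < t := lt_of_le_of_lt zero_le ht1
  -- witnesses
  have hgt : spec γ g < t := lt_of_le_of_lt (le_max_left _ _) ht1
  have hht : spec γ h < t := lt_of_le_of_lt (le_max_right _ _) ht1
  obtain ⟨n, hn⟩ := exists_lt_of_ciInf_lt hgt
  obtain ⟨m, hmw⟩ := exists_lt_of_ciInf_lt hht
  have hgn : γ (g ^ (n + 1)) < t ^ (n + 1) := pow_le_of_rpow_lt hn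
  have hhm : γ (h ^ (m + 1)) < t ^ (m + 1) := pow_le_of_rpow_lt hmw
  set n1 := n + 1 with hn1
  set m1 := m + 1 with hm1
  set E : ℝ≥0 := (max 1 (max (γ g / t) (γ h / t))) ^ (n1 + m1) with hE
  have hE1 : (1 : ℝ≥0) ≤ E := one_le_pow₀ (le_max_left _ _)
  -- claim for powers of g
  have claim : ∀ (x : B) (k1 : ℕ), γ (x ^ k1) < t ^ k1 → γ x / t ≤ max 1 (max (γ g / t) (γ h / t)) →
      k1 ≤ n1 + m1 → ∀ k, γ (x ^ k) ≤ E * t ^ k := by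
    intro x k1 hx hxd hk1 k
    have hdm := Nat.div_add_mod k k1
    have hk1pos : 0 < k1 := by
      rcases Nat.eq_zero_or_pos k1 with h' | h'
      · subst h'; simp [h1] at hx
      · exact h'
    set q := k / k1
    set r := k % k1
    have hr : r < k1 := Nat.mod_lt _ hk1pos
    have hsplit : x ^ k = (x ^ k1) ^ q * x ^ r := by
      rw [← pow_mul, ← pow_add, hdm]
    have hb1 : γ (x ^ k) ≤ γ (x ^ k1) ^ q * γ x ^ r := by
      rw [hsplit]
      exact le_trans (hm _ _) (mul_le_mul' (sm_pow γ h1 hm _ _) (sm_pow γ h1 hm _ _))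
    have hb2 : γ (x ^ k1) ^ q * γ x ^ r ≤ (t ^ k1) ^ q * ((γ x / t) ^ r * t ^ r) := by
      refine mul_le_mul' (pow_le_pow_left' (le_of_lt hx) q) (le_of_eq ?_)
      rw [← mul_pow, div_mul_cancel₀ _ (ne_of_gt ht0)]
    have hb3 : (γ x / t) ^ r ≤ E := by
      calc (γ x / t) ^ r ≤ (max 1 (max (γ g / t) (γ h / t))) ^ r := pow_le_pow_left' hxd r
        _ ≤ E := pow_le_pow_right' (le_max_left _ _) (le_trans (le_of_lt hr) hk1)
    calc γ (x ^ k) ≤ (t ^ k1) ^ q * ((γ x / t) ^ r * t ^ r) := le_trans hb1 hb2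
      _ = (γ x / t) ^ r * (t ^ (k1 * q) * t ^ r) := by rw [← pow_mul]; ring
      _ = (γ x / t) ^ r * t ^ k := by rw [← pow_add, hdm]
      _ ≤ E * t ^ k := mul_le_mul_left hb3 _
  have claimG : ∀ k, γ (g ^ k) ≤ E * t ^ k :=
    claim g n1 hgn (le_trans (le_max_left _ _) (le_max_right _ _)) (Nat.le_add_right _ _)
  have claimH : ∀ k, γ (h ^ k) ≤ E * t ^ k :=
    claim h m1 hhm (le_trans (le_max_right _ _) (le_max_right _ _)) (Nat.le_add_left _ _)
  -- binomial bound
  have negpow : ∀ j : ℕ, γ ((-h) ^ j) = γ (h ^ j) := by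
    intro j
    rcases Nat.even_or_odd j with he | ho
    · rw [he.neg_pow]
    · rw [ho.neg_pow, um_neg γ h0 hu]
  have claimN : ∀ N : ℕ, γ ((g - h) ^ N) ≤ E * E * t ^ N := by
    intro N
    have hexp : (g - h) ^ N = ∑ k ∈ Finset.range (N + 1),
        g ^ k * (-h) ^ (N - k) * (N.choose k : B) := by
      rw [sub_eq_add_neg, add_pow]
    rw [hexp]
    refine um_finset_sum γ h0 hu _ _ _ (fun k hk => ?_)
    have hkN : k ≤ N := Nat.lt_succ_iff.1 (Finset.mem_range.1 hk)
    have step1 : γ (g ^ k * (-h) ^ (N - k) * (N.choose k : B)) ≤ γ (g ^ k * (-h) ^ (N - k)) := by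
      have : ((N.choose k : ℕ) : B) = ((N.choose k : ℕ) : B) := rfl
      exact um_natmul γ h0 hu _ _
    refine le_trans step1 ?_
    refine le_trans (hm _ _) ?_
    rw [negpow]
    calc γ (g ^ k) * γ (h ^ (N - k)) ≤ (E * t ^ k) * (E * t ^ (N - k)) :=
          mul_le_mul' (claimG k) (claimH (N - k))
      _ = E * E * (t ^ k * t ^ (N - k)) := by ring
      _ = E * E * t ^ N := by
          have hsum : k + (N - k) = N := by omega
          rw [← pow_add t k (N - k), hsum]
  -- choose N
  have hst : 1 < s / t := (one_lt_div ht0).2 ht2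
  obtain ⟨N, hNlt⟩ := pow_unbounded_of_one_lt (E * E) hst
  have hN1 : 1 ≤ N + 1 := Nat.le_add_left _ _
  have hNle : E * E ≤ (s / t) ^ (N + 1) :=
    le_trans (le_of_lt hNlt) (pow_le_pow_right' (le_of_lt hst) (Nat.le_succ N))
  -- final estimate
  have final : spec γ (g - h) ≤ s := by
    have e1 : spec γ (g - h) ≤ γ ((g - h) ^ (N + 1)) ^ (((N + 1 : ℕ) : ℝ))⁻¹ :=
      spec_le' γ _ _ hN1
    have e2 : γ ((g - h) ^ (N + 1)) ^ (((N + 1 : ℕ) : ℝ))⁻¹ ≤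
        ((s / t) ^ (N + 1) * t ^ (N + 1)) ^ (((N + 1 : ℕ) : ℝ))⁻¹ := by
      refine NNReal.rpow_le_rpow ?_ (by positivity)
      exact le_trans (claimN (N + 1)) (mul_le_mul_left hNle _)
    have e3 : ((s / t) ^ (N + 1) * t ^ (N + 1)) ^ (((N + 1 : ℕ) : ℝ))⁻¹ = s := by
      rw [← mul_pow, div_mul_cancel₀ _ (ne_of_gt ht0)]
      rw [← NNReal.rpow_natCast s (N + 1), ← NNReal.rpow_mul]
      rw [mul_inv_cancel₀ (by positivity), NNReal.rpow_one]
    exact le_trans e1 (le_trans e2 (le_of_eq e3))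
  exact absurd final (not_le.2 hs2)

end SpecUltra

section MoreHelpers

lemma nn_exists_factors {a b w : ℝ≥0} (h : a * b < w) : ∃ p q, a < p ∧ b < q ∧ p * q ≤ w := by
  have hw : 0 < w := lt_of_le_of_lt zero_le h
  rcases eq_or_ne a 0 with rfl | ha
  · rcases eq_or_ne b 0 with rfl | hb
    · exact ⟨NNReal.sqrt w, NNReal.sqrt w, by positivity, by positivity,
        le_of_eq (NNReal.mul_self_sqrt w)⟩
    · refine ⟨w / (2 * b), 2 * b, ?_, ?_, le_of_eq ?_⟩
      · positivity
      · have hb' : 0 < b := zero_lt_iff.2 hb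
        calc b = 1 * b := (one_mul b).symm
          _ < 2 * b := by exact mul_lt_mul_of_pos_right one_lt_two hb'
      · rw [div_mul_cancel₀]
        positivity
  · rcases eq_or_ne b 0 with rfl | hb
    · refine ⟨2 * a, w / (2 * a), ?_, ?_, le_of_eq ?_⟩
      · have ha' : 0 < a := zero_lt_iff.2 ha
        calc a = 1 * a := (one_mul a).symm
          _ < 2 * a := by exact mul_lt_mul_of_pos_right one_lt_two ha'
      · positivity
      · rw [mul_comm, div_mul_cancel₀]
        positivity
    · have hab : (0 : ℝ≥0) < a * b := by positivity
      have h1 : 1 < w / (a * b) := (one_lt_div hab).2 h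
      set r := NNReal.sqrt (w / (a * b)) with hr
      have hr1 : 1 < r := by
        have := NNReal.sqrt_lt_sqrt.2 h1
        simpa using this
      refine ⟨a * r, b * r, ?_, ?_, le_of_eq ?_⟩
      · exact lt_mul_of_one_lt_right (zero_lt_iff.2 ha) hr1
      · exact lt_mul_of_one_lt_right (zero_lt_iff.2 hb) hr1
      · calc a * r * (b * r) = a * b * (r * r) := by ring
          _ = a * b * (w / (a * b)) := by rw [hr, NNReal.mul_self_sqrt]
          _ = w := mul_div_cancel₀ w (ne_of_gt hab)

variable {ι : Type*} {B : Type*} [CommRing B]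

lemma list_sum_map_mul (c : B) (l : List ι) (f : ι → B) :
    (l.map fun x => c * f x).sum = c * (l.map f).sum := by
  induction l with
  | nil => simp
  | cons a l ih => simp [ih, mul_add]

lemma list_sum_map_add (l : List ι) (f g : ι → B) :
    (l.map fun x => f x + g x).sum = (l.map f).sum + (l.map g).sum := by
  induction l with
  | nil => simp
  | cons a l ih => simp [ih]; ring

lemma list_sum_map_neg (l : List ι) (f : ι → B) :
    (l.map fun x => -f x).sum = -(l.map f).sum := by
  induction l with
  | nil => simp
  | cons a l ih => simp [ih]; ring

end MoreHelpers

section SpecLin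
variable {A B : Type*} [CommRing A] [CommRing B]

lemma alpha_pow (α : A → ℝ≥0) (hα1 : α 1 = 1) (hαm : ∀ a a' : A, α (a * a') = α a * α a')
    (a : A) (n : ℕ) : α (a ^ n) = α a ^ n := by
  induction n with
  | zero => simp [hα1]
  | succ n ih => rw [pow_succ, pow_succ, hαm, ih]

lemma spec_lin (φ : A →+* B) (α : A → ℝ≥0) (hα1 : α 1 = 1)
    (hαm : ∀ a a' : A, α (a * a') = α a * α a') (γ : B → ℝ≥0)
    (hlin : ∀ (a : A) (b : B), γ (φ a * b) = α a * γ b) (a : A) (b : B) :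
    spec γ (φ a * b) = α a * spec γ b := by
  unfold spec
  rw [nn_mul_iInf]
  refine iInf_congr fun n => ?_
  have h1 : (φ a * b) ^ (n + 1) = φ (a ^ (n + 1)) * b ^ (n + 1) := by
    rw [mul_pow, map_pow]
  rw [h1, hlin, alpha_pow α hα1 hαm, NNReal.mul_rpow, nn_pow_rpow_inv]

end SpecLin

section Main2
variable {A B : Type*} [CommRing A] [CommRing B]

lemma nn_div_le_div {a b : ℝ≥0} (h : a ≤ b) (c : ℝ≥0) : a / c ≤ b / c := by
  rw [div_eq_mul_inv, div_eq_mul_inv]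
  exact mul_le_mul_left h _

lemma nn_mul_div_mul_right (x y d : ℝ≥0) (hd : d ≠ 0) : x * d / (y * d) = x / y := by
  rw [mul_comm x d, mul_comm y d, mul_div_mul_left x y hd]

/-- A "good" seminorm for the extension problem. -/
def Good (φ : A →+* B) (α : A → ℝ≥0) (νB : B → ℝ≥0) (γ : B → ℝ≥0) : Prop :=
  γ 0 = 0 ∧ (∀ g h : B, γ (g - h) ≤ max (γ g) (γ h)) ∧ γ 1 = 1 ∧
    (∀ g h : B, γ (g * h) ≤ γ g * γ h) ∧ (∀ b : B, γ b ≤ νB b) ∧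
    (∀ (a : A) (b : B), γ (φ a * b) = α a * γ b)

lemma chain_inf_good (φ : A →+* B) (α : A → ℝ≥0) (νB : B → ℝ≥0)
    (c : Set (B → ℝ≥0)) (hc : ∀ γ₁ ∈ c, ∀ γ₂ ∈ c, γ₁ ≤ γ₂ ∨ γ₂ ≤ γ₁)
    (hG : ∀ γ ∈ c, Good φ α νB γ) (hne : c.Nonempty) :
    Good φ α νB (fun b => ⨅ γ : c, (γ : B → ℝ≥0) b) := by
  haveI : Nonempty c := hne.to_subtype
  obtain ⟨γy, hγy⟩ := hne
  set lb : B → ℝ≥0 := fun b => ⨅ γ : c, (γ : B → ℝ≥0) b with hlb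
  have hlb_le : ∀ (γ : c) (b : B), lb b ≤ (γ : B → ℝ≥0) b := fun γ b => nnciInf_le _ γ
  have hmin2 : ∀ (γ₁ γ₂ : c), ∃ δ : c, (δ : B → ℝ≥0) ≤ γ₁ ∧ (δ : B → ℝ≥0) ≤ γ₂ := by
    intro γ₁ γ₂
    rcases hc γ₁ γ₁.2 γ₂ γ₂.2 with h | h
    · exact ⟨γ₁, le_rfl, h⟩
    · exact ⟨γ₂, h, le_rfl⟩
  refine ⟨?_, ?_, ?_, ?_, ?_, ?_⟩
  · refine le_antisymm ?_ zero_le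
    exact le_trans (hlb_le ⟨γy, hγy⟩ 0) (le_of_eq (hG γy hγy).1)
  · intro g h
    by_contra hcon
    push_neg at hcon
    obtain ⟨γ₁, h₁⟩ := exists_lt_of_ciInf_lt
      (lt_of_le_of_lt (le_max_left (lb g) (lb h)) hcon)
    obtain ⟨γ₂, h₂⟩ := exists_lt_of_ciInf_lt
      (lt_of_le_of_lt (le_max_right (lb g) (lb h)) hcon)
    obtain ⟨δ, hδ₁, hδ₂⟩ := hmin2 γ₁ γ₂
    have : lb (g - h) ≤ max ((γ₁ : B → ℝ≥0) g) ((γ₂ : B → ℝ≥0) h) :=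
      le_trans (hlb_le δ _) (le_trans ((hG δ δ.2).2.1 g h)
        (max_le_max (hδ₁ g) (hδ₂ h)))
    exact absurd (lt_of_le_of_lt this (max_lt h₁ h₂)) (lt_irrefl _)
  · refine le_antisymm (le_trans (hlb_le ⟨γy, hγy⟩ 1) (le_of_eq (hG γy hγy).2.2.1)) ?_
    refine le_ciInf fun γ => le_of_eq ((hG γ γ.2).2.2.1).symm
  · intro g h
    refine le_of_forall_gt_imp_ge_of_dense fun w hw => ?_
    obtain ⟨p, q, hp, hq, hpq⟩ := nn_exists_factors hw
    obtain ⟨γ₁, h₁⟩ := exists_lt_of_ciInf_lt hp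
    obtain ⟨γ₂, h₂⟩ := exists_lt_of_ciInf_lt hq
    obtain ⟨δ, hδ₁, hδ₂⟩ := hmin2 γ₁ γ₂
    calc lb (g * h) ≤ (δ : B → ℝ≥0) (g * h) := hlb_le δ _
      _ ≤ (δ : B → ℝ≥0) g * (δ : B → ℝ≥0) h := (hG δ δ.2).2.2.2.1 g h
      _ ≤ (γ₁ : B → ℝ≥0) g * (γ₂ : B → ℝ≥0) h := mul_le_mul' (hδ₁ g) (hδ₂ h)
      _ ≤ p * q := mul_le_mul' (le_of_lt h₁) (le_of_lt h₂)
      _ ≤ w := hpq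
  · intro b
    exact le_trans (hlb_le ⟨γy, hγy⟩ b) ((hG γy hγy).2.2.2.2.1 b)
  · intro a b
    have : ∀ γ : c, (γ : B → ℝ≥0) (φ a * b) = α a * (γ : B → ℝ≥0) b :=
      fun γ => (hG γ γ.2).2.2.2.2.2 a b
    calc lb (φ a * b) = ⨅ γ : c, α a * (γ : B → ℝ≥0) b := iInf_congr this
      _ = α a * lb b := (nn_mul_iInf _ _).symm

lemma main2 (φ : A →+* B) (α : A → ℝ≥0) (νB : B → ℝ≥0)
    (hα1 : α 1 = 1) (hαm : ∀ a a' : A, α (a * a') = α a * α a')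
    (hex : ∃ γ, Good φ α νB γ) :
    ∃ β : B → ℝ≥0, IsMultSeminorm β ∧ (∀ b : B, β b ≤ νB b) ∧ ∀ a : A, β (φ a) = α a := by
  classical
  obtain ⟨γ₀, hγ₀⟩ := hex
  -- Zorn's lemma in the dual order to get a minimal good seminorm
  set S : Set ((B → ℝ≥0)ᵒᵈ) := {γ | Good φ α νB (OrderDual.ofDual γ)} with hS
  have hzorn := zorn_le_nonempty₀ S ?_ (OrderDual.toDual γ₀) hγ₀
  swap
  · intro c hcS hchain y hy
    have hne : {γ : B → ℝ≥0 | OrderDual.toDual γ ∈ c}.Nonempty :=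
      ⟨OrderDual.ofDual y, hy⟩
    set c' : Set (B → ℝ≥0) := {γ | OrderDual.toDual γ ∈ c} with hc'
    have hgood := chain_inf_good φ α νB c' ?_ ?_ hne
    · refine ⟨OrderDual.toDual (fun b => ⨅ γ : c', (γ : B → ℝ≥0) b), hgood, ?_⟩
      intro z hz
      change (fun b => ⨅ γ : c', (γ : B → ℝ≥0) b) ≤ OrderDual.ofDual z
      intro b
      exact nnciInf_le _ (⟨OrderDual.ofDual z, hz⟩ : c')
    · intro γ₁ h₁ γ₂ h₂
      rcases eq_or_ne γ₁ γ₂ with rfl | hne'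
      · exact Or.inl le_rfl
      · rcases hchain h₁ h₂ (fun h => hne' (congrArg OrderDual.ofDual h)) with h | h
        · exact Or.inr h
        · exact Or.inl h
    · intro γ hγ
      exact hcS hγ
  obtain ⟨m, _, hmS, hmax⟩ := hzorn
  set β : B → ℝ≥0 := OrderDual.ofDual m with hβdef
  have hβ : Good φ α νB β := hmS
  have hmin : ∀ γ : B → ℝ≥0, Good φ α νB γ → γ ≤ β → γ = β := by
    intro γ hγ hle
    have := hmax (y := OrderDual.toDual γ) hγ hle
    exact le_antisymm hle this
  obtain ⟨hβ0, hβu, hβ1, hβm, hβν, hβlin⟩ := hβ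
  -- Step 1 : β is power-multiplicative
  have hspec : Good φ α νB (spec β) := by
    refine ⟨spec_zero β hβ0, spec_ultra β hβ0 hβu hβ1 hβm, spec_one β hβ1,
      spec_submul β hβ1 hβm, ?_, spec_lin φ α hα1 hαm β hβlin⟩
    exact fun b => le_trans (spec_le_self β b) (hβν b)
  have hspecβ : spec β = β := hmin _ hspec (fun b => spec_le_self β b)
  have hpm : ∀ (b : B) (n : ℕ), β (b ^ n) = β b ^ n := by
    intro b n
    refine le_antisymm (sm_pow β hβ1 hβm b n) ?_
    cases n with
    | zero => simp [hβ1]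
    | succ n =>
        have h1 : β b ≤ β (b ^ (n + 1)) ^ (((n : ℝ) + 1)⁻¹) := by
          have h0 := spec_le β b n
          rwa [hspecβ] at h0
        have h2 := pow_le_pow_left' h1 (n + 1)
        rwa [nn_rpow_inv_pow] at h2
  -- Step 2 : β is multiplicative
  have hmult : ∀ g f : B, β (g * f) = β g * β f := by
    intro g f
    rcases eq_or_ne (β f) 0 with hf | hf
    · rw [hf, mul_zero]
      exact le_antisymm (le_trans (hβm g f) (by rw [hf, mul_zero])) zero_le
    · have hfn : ∀ n : ℕ, β (f ^ n) = β f ^ n := fun n => hpm f n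
      have hfn0 : ∀ n : ℕ, β f ^ n ≠ 0 := fun n => pow_ne_zero n hf
      set γ : B → ℝ≥0 := fun x => ⨅ n : ℕ, β (x * f ^ n) / β f ^ n with hγdef
      have hγle : ∀ x, γ x ≤ β x := by
        intro x
        have := nnciInf_le (fun n : ℕ => β (x * f ^ n) / β f ^ n) 0
        simpa using this
      have hterm : ∀ (x : B) (n k : ℕ),
          β (x * f ^ (n + k)) / β f ^ (n + k) ≤ β (x * f ^ n) / β f ^ n := by
        intro x n k
        have h1 : β (x * f ^ (n + k)) ≤ β (x * f ^ n) * β f ^ k := by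
          rw [pow_add, ← mul_assoc]
          exact le_trans (hβm _ _) (mul_le_mul_right (sm_pow β hβ1 hβm f k) _)
        calc β (x * f ^ (n + k)) / β f ^ (n + k)
            ≤ (β (x * f ^ n) * β f ^ k) / (β f ^ n * β f ^ k) := by
              rw [← pow_add]
              exact nn_div_le_div h1 _
          _ = β (x * f ^ n) / β f ^ n := nn_mul_div_mul_right _ _ _ (hfn0 k)
      have hγgood : Good φ α νB γ := by
        refine ⟨?_, ?_, ?_, ?_, ?_, ?_⟩
        · refine le_antisymm ?_ zero_le
          refine le_trans (hγle 0) (le_of_eq ?_)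
          simpa using hβ0
        · intro g' h'
          by_contra hcon
          push_neg at hcon
          obtain ⟨n, hn⟩ := exists_lt_of_ciInf_lt
            (lt_of_le_of_lt (le_max_left (γ g') (γ h')) hcon)
          obtain ⟨m', hm'⟩ := exists_lt_of_ciInf_lt
            (lt_of_le_of_lt (le_max_right (γ g') (γ h')) hcon)
          have key : γ (g' - h') ≤ max (β (g' * f ^ n) / β f ^ n)
              (β (h' * f ^ m') / β f ^ m') := by
            have hsub : (g' - h') * f ^ (n + m') = g' * f ^ (n + m') - h' * f ^ (n + m') :=
              sub_mul _ _ _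
            have h1 : γ (g' - h') ≤ β ((g' - h') * f ^ (n + m')) / β f ^ (n + m') :=
              nnciInf_le _ (n + m')
            have h2 : β ((g' - h') * f ^ (n + m')) ≤
                max (β (g' * f ^ (n + m'))) (β (h' * f ^ (n + m'))) := by
              rw [hsub]; exact hβu _ _
            have h3 : β ((g' - h') * f ^ (n + m')) / β f ^ (n + m') ≤
                max (β (g' * f ^ (n + m')) / β f ^ (n + m'))
                  (β (h' * f ^ (n + m')) / β f ^ (n + m')) := by
              refine le_trans (nn_div_le_div h2 _) (le_of_eq ?_)
              rcases le_total (β (g' * f ^ (n + m'))) (β (h' * f ^ (n + m'))) with h | h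
              · rw [max_eq_right h, max_eq_right (nn_div_le_div h _)]
              · rw [max_eq_left h, max_eq_left (nn_div_le_div h _)]
            refine le_trans h1 (le_trans h3 (max_le_max ?_ ?_))
            · exact hterm g' n m'
            · have : m' + n = n + m' := by omega
              rw [← this]
              exact hterm h' m' n
          exact absurd (lt_of_le_of_lt key (max_lt hn hm')) (lt_irrefl _)
        · have : ∀ n : ℕ, β ((1 : B) * f ^ n) / β f ^ n = 1 := by
            intro n
            rw [one_mul, hfn n, div_self (hfn0 n)]
          calc γ 1 = ⨅ n : ℕ, β ((1 : B) * f ^ n) / β f ^ n := rfl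
            _ = ⨅ _ : ℕ, (1 : ℝ≥0) := iInf_congr this
            _ = 1 := ciInf_const
        · intro g' h'
          refine nn_le_mul_iInf fun n m' => ?_
          have h1 : γ (g' * h') ≤ β (g' * h' * f ^ (n + m')) / β f ^ (n + m') :=
            nnciInf_le _ (n + m')
          have h2 : β (g' * h' * f ^ (n + m')) ≤ β (g' * f ^ n) * β (h' * f ^ m') := by
            have : g' * h' * f ^ (n + m') = (g' * f ^ n) * (h' * f ^ m') := by
              rw [pow_add]; ring
            rw [this]; exact hβm _ _
          refine le_trans h1 ?_
          calc β (g' * h' * f ^ (n + m')) / β f ^ (n + m')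
              ≤ (β (g' * f ^ n) * β (h' * f ^ m')) / (β f ^ n * β f ^ m') := by
                rw [pow_add (β f) n m']
                exact nn_div_le_div h2 _
            _ = β (g' * f ^ n) / β f ^ n * (β (h' * f ^ m') / β f ^ m') :=
                (div_mul_div_comm _ _ _ _).symm
        · intro b
          exact le_trans (hγle b) (hβν b)
        · intro a b
          have : ∀ n : ℕ, β (φ a * b * f ^ n) / β f ^ n = α a * (β (b * f ^ n) / β f ^ n) := by
            intro n
            rw [mul_assoc, hβlin, mul_div_assoc]
          calc γ (φ a * b) = ⨅ n : ℕ, α a * (β (b * f ^ n) / β f ^ n) := iInf_congr this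
            _ = α a * γ b := (nn_mul_iInf _ _).symm
      have hγβ : γ = β := hmin γ hγgood hγle
      have hkey : β g ≤ β (g * f) / β f := by
        have h1 : γ g ≤ β (g * f ^ 1) / β f ^ 1 := nnciInf_le _ 1
        rw [hγβ] at h1
        simpa using h1
      refine le_antisymm (hβm g f) ?_
      exact (le_div_iff₀ (zero_lt_iff.2 hf)).1 hkey
  exact ⟨β, ⟨hβ0, hβu, hβ1, fun g h => hmult g h⟩, hβν, fun a => by
    have := hβlin a 1
    rwa [mul_one, hβ1, mul_one] at this⟩

end Main2

section ExistsGood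
variable {A B : Type*} [CommRing A] [CommRing B]

lemma nn_max_div (x y c : ℝ≥0) : max x y / c = max (x / c) (y / c) := by
  rcases le_total x y with h | h
  · rw [max_eq_right h, max_eq_right (nn_div_le_div h c)]
  · rw [max_eq_left h, max_eq_left (nn_div_le_div h c)]

/-- value of a representation -/
noncomputable def repVal (α : A → ℝ≥0) (νB : B → ℝ≥0) (l : List (A × B)) : ℝ≥0 :=
  (l.map fun p => α p.1 * νB p.2).foldr max 0

/-- representations of an element -/
def RepTy (φ : A →+* B) (b : B) : Type _ :=
  {l : List (A × B) // b = (l.map fun p => φ p.1 * p.2).sum}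

instance (φ : A →+* B) (b : B) : Nonempty (RepTy φ b) :=
  ⟨⟨[(1, b)], by simp⟩⟩

noncomputable def beta0 (φ : A →+* B) (α : A → ℝ≥0) (νB : B → ℝ≥0) (b : B) : ℝ≥0 :=
  ⨅ l : RepTy φ b, repVal α νB l.1

noncomputable def beta1 (φ : A →+* B) (α : A → ℝ≥0) (νB : B → ℝ≥0) (b : B) : ℝ≥0 :=
  ⨅ a : {a : A // α a ≠ 0}, beta0 φ α νB (φ a.1 * b) / α a.1

lemma rep_mul_sum (φ : A →+* B) (l₁ l₂ : List (A × B)) :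
    ((l₁.flatMap fun p => l₂.map fun q => (p.1 * q.1, p.2 * q.2)).map fun p => φ p.1 * p.2).sum
      = (l₁.map fun p => φ p.1 * p.2).sum * (l₂.map fun p => φ p.1 * p.2).sum := by
  induction l₁ with
  | nil => simp
  | cons a l ih =>
      rw [List.flatMap_cons, List.map_append, List.sum_append, ih, List.map_cons,
        List.sum_cons, add_mul]
      congr 1
      rw [List.map_map]
      have e : ((fun p : A × B => φ p.1 * p.2) ∘ fun q : A × B => (a.1 * q.1, a.2 * q.2))
          = fun q : A × B => (φ a.1 * a.2) * (φ q.1 * q.2) := by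
        funext q; simp [map_mul]; ring
      rw [e, list_sum_map_mul]

set_option maxHeartbeats 1000000 in
lemma exists_good (νA : A → ℝ≥0) (νB : B → ℝ≥0)
    (hνA : IsSubmultNorm νA) (hνB : IsSubmultNorm νB)
    (φ : A →+* B)
    (hiso : ∀ a : A, νB (φ a) = νA a)
    (C : AddSubgroup B)
    (hstab : ∀ (a : A), ∀ c ∈ C, φ a * c ∈ C)
    (hdec : ∀ b : B, ∃! ac : A × C, b = φ ac.1 + (ac.2 : B))
    (horth : ∀ (a : A), ∀ c ∈ C, νB (φ a + c) = max (νB (φ a)) (νB c))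
    (α : A → ℝ≥0) (hα : IsMultSeminorm α) (hαb : ∀ a : A, α a ≤ νA a) :
    ∃ γ, Good φ α νB γ := by
  classical
  obtain ⟨hα0, hαu, hα1, hαm⟩ := hα
  obtain ⟨hν0iff, hνu, hν1, hνm⟩ := hνB
  have hν0 : νB 0 = 0 := (hν0iff 0).2 rfl
  have hνneg : ∀ x : B, νB (-x) = νB x := um_neg νB hν0 hνu
  choose dd hdd using fun b : B => (hdec b).exists
  -- basic facts about beta0
  have hrep : ∀ (b : B) (l : List (A × B)), b = (l.map fun p => φ p.1 * p.2).sum →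
      beta0 φ α νB b ≤ repVal α νB l :=
    fun b l hl => nnciInf_le _ (⟨l, hl⟩ : RepTy φ b)
  have hval_mem : ∀ (l : List (A × B)) (p : A × B), p ∈ l →
      α p.1 * νB p.2 ≤ repVal α νB l :=
    fun l p hp => le_foldr_max _ _ (List.mem_map_of_mem hp)
  have h00 : beta0 φ α νB 0 = 0 :=
    le_antisymm (le_trans (hrep 0 [] (by simp)) (by simp [repVal])) zero_le
  have h0ν : ∀ b, beta0 φ α νB b ≤ νB b := fun b =>
    le_trans (hrep b [(1, b)] (by simp)) (by simp [repVal, hα1])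
  have h0u : ∀ g h : B, beta0 φ α νB (g - h) ≤ max (beta0 φ α νB g) (beta0 φ α νB h) := by
    intro g h
    by_contra hcon
    push_neg at hcon
    obtain ⟨⟨l₁, hl₁⟩, h1⟩ := exists_lt_of_ciInf_lt
      (lt_of_le_of_lt (le_max_left (beta0 φ α νB g) (beta0 φ α νB h)) hcon)
    obtain ⟨⟨l₂, hl₂⟩, h2⟩ := exists_lt_of_ciInf_lt
      (lt_of_le_of_lt (le_max_right (beta0 φ α νB g) (beta0 φ α νB h)) hcon)
    have hsum : g - h = (((l₁ ++ l₂.map fun p => (p.1, -p.2)).map fun p => φ p.1 * p.2)).sum := by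
      rw [List.map_append, List.sum_append, List.map_map]
      have e : ((fun p : A × B => φ p.1 * p.2) ∘ fun p : A × B => (p.1, -p.2))
          = fun p : A × B => -(φ p.1 * p.2) := by
        funext p; simp
      rw [e, list_sum_map_neg, ← hl₁, ← hl₂, sub_eq_add_neg]
    have hv := hrep _ _ hsum
    have hre : repVal α νB (l₁ ++ l₂.map fun p => (p.1, -p.2))
        = max (repVal α νB l₁) (repVal α νB l₂) := by
      unfold repVal
      rw [List.map_append, foldr_max_append, List.map_map]
      have e4 : ((fun p : A × B => α p.1 * νB p.2) ∘ fun p : A × B => (p.1, -p.2))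
          = fun p : A × B => α p.1 * νB p.2 := by
        funext p; simp [hνneg]
      rw [e4]
    rw [hre] at hv
    exact absurd (lt_of_le_of_lt hv (max_lt h1 h2)) (lt_irrefl _)
  have h0m : ∀ g h : B, beta0 φ α νB (g * h) ≤ beta0 φ α νB g * beta0 φ α νB h := by
    intro g h
    show beta0 φ α νB (g * h) ≤ (⨅ l : RepTy φ g, repVal α νB l.1) * ⨅ l : RepTy φ h, repVal α νB l.1
    refine nn_le_mul_iInf fun l₁ l₂ => ?_
    have hLsum : g * h = ((l₁.1.flatMap fun p => l₂.1.map fun q =>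
        (p.1 * q.1, p.2 * q.2)).map fun p => φ p.1 * p.2).sum := by
      rw [rep_mul_sum, ← l₁.2, ← l₂.2]
    refine le_trans (hrep _ _ hLsum) ?_
    refine foldr_max_le _ _ fun x hx => ?_
    obtain ⟨p, hp, rfl⟩ := List.mem_map.1 hx
    obtain ⟨p₁, hp₁, hp'⟩ := List.mem_flatMap.1 hp
    obtain ⟨p₂, hp₂, rfl⟩ := List.mem_map.1 hp'
    calc α (p₁.1 * p₂.1) * νB (p₁.2 * p₂.2)
        ≤ (α p₁.1 * α p₂.1) * (νB p₁.2 * νB p₂.2) := by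
          rw [hαm]; exact mul_le_mul_right (hνm _ _) _
      _ = (α p₁.1 * νB p₁.2) * (α p₂.1 * νB p₂.2) := by ring
      _ ≤ repVal α νB l₁.1 * repVal α νB l₂.1 :=
          mul_le_mul' (hval_mem _ _ hp₁) (hval_mem _ _ hp₂)
  have h0le : ∀ (a : A) (b : B), beta0 φ α νB (φ a * b) ≤ α a * beta0 φ α νB b := by
    intro a b
    have e : α a * beta0 φ α νB b = ⨅ l : RepTy φ b, α a * repVal α νB l.1 :=
      nn_mul_iInf _ _
    rw [e]
    refine le_ciInf fun l => ?_
    have hsum : φ a * b = ((l.1.map fun p => (a * p.1, p.2)).map fun p => φ p.1 * p.2).sum := by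
      rw [List.map_map]
      have e2 : ((fun p : A × B => φ p.1 * p.2) ∘ fun p : A × B => (a * p.1, p.2))
          = fun p : A × B => φ a * (φ p.1 * p.2) := by
        funext p; simp [map_mul, mul_assoc]
      rw [e2, list_sum_map_mul, ← l.2]
    refine le_trans (hrep _ _ hsum) (le_of_eq ?_)
    unfold repVal
    rw [List.map_map]
    have e3 : ((fun p : A × B => α p.1 * νB p.2) ∘ fun p : A × B => (a * p.1, p.2))
        = fun p : A × B => α a * (α p.1 * νB p.2) := by
      funext p; simp only [Function.comp_apply]; rw [hαm, mul_assoc]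
    rw [e3, show (l.1.map fun p : A × B => α a * (α p.1 * νB p.2))
        = ((l.1.map fun p : A × B => α p.1 * νB p.2).map fun x => α a * x) by
      rw [List.map_map]; rfl]
    exact foldr_max_map_mul (α a) _
  have h0φ : ∀ a : A, beta0 φ α νB (φ a) = α a := by
    intro a
    refine le_antisymm (le_trans (hrep _ [(a, 1)] (by simp)) (by simp [repVal, hν1])) ?_
    refine le_ciInf fun lr => ?_
    obtain ⟨l, hl⟩ := lr
    have hc'C : (l.map fun p => φ p.1 * ((dd p.2).2 : B)).sum ∈ C := by
      refine list_sum_mem fun x hx => ?_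
      obtain ⟨p, hp, rfl⟩ := List.mem_map.1 hx
      exact hstab p.1 _ ((dd p.2).2).2
    have hsplit : φ a = φ ((l.map fun p => p.1 * (dd p.2).1).sum)
        + (l.map fun p => φ p.1 * ((dd p.2).2 : B)).sum := by
      have e1 : φ a = (l.map fun p =>
          φ (p.1 * (dd p.2).1) + φ p.1 * ((dd p.2).2 : B)).sum := by
        rw [hl]
        refine congrArg List.sum (List.map_congr_left fun p _ => ?_)
        conv_lhs => rw [hdd p.2]
        rw [mul_add, map_mul]
      rw [e1, list_sum_map_add, map_list_sum, List.map_map]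
      rfl
    have huniq : (⟨a, (0 : C)⟩ : A × C)
        = ⟨(l.map fun p => p.1 * (dd p.2).1).sum, ⟨_, hc'C⟩⟩ :=
      ExistsUnique.unique (hdec (φ a)) (by simp) hsplit
    have ha'' : a = (l.map fun p => p.1 * (dd p.2).1).sum := congrArg Prod.fst huniq
    refine le_trans (le_of_eq (congrArg α ha'')) ?_
    refine um_list_sum α hα0 hαu _ _ fun x hx => ?_
    obtain ⟨p, hp, rfl⟩ := List.mem_map.1 hx
    calc α (p.1 * (dd p.2).1) = α p.1 * α ((dd p.2).1) := hαm _ _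
      _ ≤ α p.1 * νB p.2 := by
          refine mul_le_mul_right ?_ _
          refine le_trans (hαb _) ?_
          rw [← hiso]
          have hh := horth (dd p.2).1 _ ((dd p.2).2).2
          rw [← hdd p.2] at hh
          calc νB (φ (dd p.2).1) ≤ max (νB (φ (dd p.2).1)) (νB ((dd p.2).2 : B)) :=
                le_max_left _ _
            _ = νB p.2 := hh.symm
      _ ≤ repVal α νB l := hval_mem l p hp
  have h01 : beta0 φ α νB 1 = 1 := by
    have := h0φ 1
    rwa [map_one, hα1] at this
  -- beta1
  haveI hKne : Nonempty {a : A // α a ≠ 0} := ⟨⟨1, by simp [hα1]⟩⟩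
  have hb1le : ∀ b, beta1 φ α νB b ≤ beta0 φ α νB b := by
    intro b
    have := nnciInf_le (fun a : {a : A // α a ≠ 0} => beta0 φ α νB (φ a.1 * b) / α a.1)
      ⟨1, by simp [hα1]⟩
    simpa [hα1, beta1] using this
  refine ⟨beta1 φ α νB, ?_, ?_, ?_, ?_, ?_, ?_⟩
  · exact le_antisymm (le_trans (hb1le 0) (le_of_eq h00)) zero_le
  · intro g h
    by_contra hcon
    push_neg at hcon
    obtain ⟨a₁, h1⟩ := exists_lt_of_ciInf_lt
      (lt_of_le_of_lt (le_max_left (beta1 φ α νB g) (beta1 φ α νB h)) hcon)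
    obtain ⟨a₂, h2⟩ := exists_lt_of_ciInf_lt
      (lt_of_le_of_lt (le_max_right (beta1 φ α νB g) (beta1 φ α νB h)) hcon)
    have hK : α (a₁.1 * a₂.1) ≠ 0 := by rw [hαm]; exact mul_ne_zero a₁.2 a₂.2
    have hstep : beta1 φ α νB (g - h)
        ≤ max (beta0 φ α νB (φ a₁.1 * g) / α a₁.1) (beta0 φ α νB (φ a₂.1 * h) / α a₂.1) := by
      have t1 : beta1 φ α νB (g - h)
          ≤ beta0 φ α νB (φ (a₁.1 * a₂.1) * (g - h)) / α (a₁.1 * a₂.1) :=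
        nnciInf_le (fun a' : {a : A // α a ≠ 0} =>
          beta0 φ α νB (φ a'.1 * (g - h)) / α a'.1) ⟨_, hK⟩
      have t2 : beta0 φ α νB (φ (a₁.1 * a₂.1) * (g - h))
          ≤ max (α a₂.1 * beta0 φ α νB (φ a₁.1 * g)) (α a₁.1 * beta0 φ α νB (φ a₂.1 * h)) := by
        have e : φ (a₁.1 * a₂.1) * (g - h)
            = (φ a₂.1 * (φ a₁.1 * g)) - (φ a₁.1 * (φ a₂.1 * h)) := by
          rw [map_mul]; ring
        rw [e]
        exact le_trans (h0u _ _) (max_le_max (h0le a₂.1 _) (h0le a₁.1 _))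
      refine le_trans t1 ?_
      rw [hαm]
      refine le_trans (nn_div_le_div t2 _) (le_of_eq ?_)
      rw [nn_max_div]
      congr 1
      · rw [mul_comm (α a₁.1) (α a₂.1), mul_div_mul_left _ _ a₂.2]
      · rw [mul_div_mul_left _ _ a₁.2]
    exact absurd (lt_of_le_of_lt hstep (max_lt h1 h2)) (lt_irrefl _)
  · have e : ∀ a : {a : A // α a ≠ 0},
        beta0 φ α νB (φ a.1 * 1) / α a.1 = 1 := by
      intro a
      rw [mul_one, h0φ, div_self a.2]
    calc beta1 φ α νB 1 = ⨅ _ : {a : A // α a ≠ 0}, (1 : ℝ≥0) := iInf_congr e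
      _ = 1 := ciInf_const
  · intro g h
    show beta1 φ α νB (g * h) ≤ (⨅ a : {a : A // α a ≠ 0}, beta0 φ α νB (φ a.1 * g) / α a.1)
      * ⨅ a : {a : A // α a ≠ 0}, beta0 φ α νB (φ a.1 * h) / α a.1
    refine nn_le_mul_iInf fun a₁ a₂ => ?_
    have hK : α (a₁.1 * a₂.1) ≠ 0 := by rw [hαm]; exact mul_ne_zero a₁.2 a₂.2
    have t1 : beta1 φ α νB (g * h)
        ≤ beta0 φ α νB (φ (a₁.1 * a₂.1) * (g * h)) / α (a₁.1 * a₂.1) :=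
      nnciInf_le (fun a' : {a : A // α a ≠ 0} =>
        beta0 φ α νB (φ a'.1 * (g * h)) / α a'.1) ⟨_, hK⟩
    have t2 : beta0 φ α νB (φ (a₁.1 * a₂.1) * (g * h))
        ≤ beta0 φ α νB (φ a₁.1 * g) * beta0 φ α νB (φ a₂.1 * h) := by
      have e : φ (a₁.1 * a₂.1) * (g * h) = (φ a₁.1 * g) * (φ a₂.1 * h) := by
        rw [map_mul]; ring
      rw [e]; exact h0m _ _
    refine le_trans t1 ?_
    rw [hαm]
    refine le_trans (nn_div_le_div t2 _) (le_of_eq ?_)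
    exact (div_mul_div_comm _ _ _ _).symm
  · exact fun b => le_trans (hb1le b) (h0ν b)
  · intro a b
    rcases eq_or_ne (α a) 0 with hz | hne0
    · rw [hz, zero_mul]
      refine le_antisymm ?_ zero_le
      refine le_trans (hb1le _) (le_trans (h0le a b) ?_)
      rw [hz, zero_mul]
    · refine le_antisymm ?_ ?_
      · have e : α a * beta1 φ α νB b
            = ⨅ a' : {a : A // α a ≠ 0}, α a * (beta0 φ α νB (φ a'.1 * b) / α a'.1) :=
          nn_mul_iInf _ _
        rw [e]
        refine le_ciInf fun a' => ?_
        have t1 : beta1 φ α νB (φ a * b)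
            ≤ beta0 φ α νB (φ a'.1 * (φ a * b)) / α a'.1 :=
          nnciInf_le (fun a' : {a : A // α a ≠ 0} =>
            beta0 φ α νB (φ a'.1 * (φ a * b)) / α a'.1) a'
        refine le_trans t1 ?_
        have e2 : φ a'.1 * (φ a * b) = φ a * (φ a'.1 * b) := by ring
        rw [e2]
        exact le_trans (nn_div_le_div (h0le a _) _) (le_of_eq (mul_div_assoc _ _ _))
      · refine le_ciInf fun a' => ?_
        have hK : α (a'.1 * a) ≠ 0 := by rw [hαm]; exact mul_ne_zero a'.2 hne0
        have t1 : beta1 φ α νB b ≤ beta0 φ α νB (φ (a'.1 * a) * b) / α (a'.1 * a) :=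
          nnciInf_le (fun a'' : {a : A // α a ≠ 0} =>
            beta0 φ α νB (φ a''.1 * b) / α a''.1) ⟨_, hK⟩
        have e2 : φ (a'.1 * a) * b = φ a'.1 * (φ a * b) := by
          rw [map_mul, mul_assoc]
        calc α a * beta1 φ α νB b
            ≤ α a * (beta0 φ α νB (φ (a'.1 * a) * b) / α (a'.1 * a)) := mul_le_mul_right t1 _
          _ = beta0 φ α νB (φ a'.1 * (φ a * b)) / α a'.1 := by
              rw [e2, hαm, mul_comm (α a'.1) (α a), ← div_div, ← mul_div_assoc,
                mul_comm (α a) _, div_mul_cancel₀ _ hne0]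

end ExistsGood

theorem mult_seminorm_extends_of_orthogonal_complement
    {A B : Type*} [CommRing A] [CommRing B]
    (νA : A → ℝ≥0) (νB : B → ℝ≥0)
    (hνA : IsSubmultNorm νA) (hνB : IsSubmultNorm νB)
    (φ : A →+* B) (hinj : Function.Injective φ)
    (hiso : ∀ a : A, νB (φ a) = νA a)
    (C : AddSubgroup B)
    (hstab : ∀ (a : A), ∀ c ∈ C, φ a * c ∈ C)
    (hdec : ∀ b : B, ∃! ac : A × C, b = φ ac.1 + (ac.2 : B))
    (horth : ∀ (a : A), ∀ c ∈ C, νB (φ a + c) = max (νB (φ a)) (νB c))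
    (α : A → ℝ≥0) (hα : IsMultSeminorm α) (hαb : ∀ a : A, α a ≤ νA a) :
    ∃ β : B → ℝ≥0, IsMultSeminorm β ∧ (∀ b : B, β b ≤ νB b) ∧
      ∀ a : A, β (φ a) = α a := by
  exact main2 φ α νB hα.2.2.1 hα.2.2.2
    (exists_good νA νB hνA hνB φ hiso C hstab hdec horth α hα hαb)
end

section
/- Let A be a commutative ring equipped with a submultiplicative norm |·|. Then the Gel'fand spectrum ℳ(A), viewed as a subset of the product space ∏_{a ∈ A} [0, |a|] with the product (pointwise convergence) topology, is a closed, and hence compact, subspace. -/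
open scoped NNReal

/-- The Gel'fand spectrum of `(A, ν)`, viewed as a subset of the product space
`∏_{a ∈ A} [0, ν a]` with the product (pointwise convergence) topology. -/
def gelfandSpectrum {A : Type*} [CommRing A] (ν : A → ℝ≥0) :
    Set (∀ a : A, Set.Icc (0 : ℝ≥0) (ν a)) :=
  {f | IsMultSeminorm (fun a : A => (f a : ℝ≥0))}

theorem gelfandSpectrum_isClosed_isCompact
    {A : Type*} [CommRing A] (ν : A → ℝ≥0) (hν : IsSubmultNorm ν) :
    IsClosed (gelfandSpectrum ν) ∧ IsCompact (gelfandSpectrum ν) := by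
  have hev : ∀ a : A, Continuous (fun f : (∀ a : A, Set.Icc (0 : ℝ≥0) (ν a)) =>
      (f a : ℝ≥0)) := fun a => continuous_subtype_val.comp (continuous_apply a)
  have hclosed : IsClosed (gelfandSpectrum ν) := by
    have : gelfandSpectrum ν =
        {f : ∀ a : A, Set.Icc (0 : ℝ≥0) (ν a) | (f 0 : ℝ≥0) = 0} ∩
        ((⋂ (g : A) (h : A), {f : ∀ a : A, Set.Icc (0 : ℝ≥0) (ν a) |
            (f (g - h) : ℝ≥0) ≤ max (f g : ℝ≥0) (f h : ℝ≥0)}) ∩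
        ({f : ∀ a : A, Set.Icc (0 : ℝ≥0) (ν a) | (f 1 : ℝ≥0) = 1} ∩
        ⋂ (g : A) (h : A), {f : ∀ a : A, Set.Icc (0 : ℝ≥0) (ν a) |
            (f (g * h) : ℝ≥0) = (f g : ℝ≥0) * (f h : ℝ≥0)})) := by
      ext f
      simp only [gelfandSpectrum, IsMultSeminorm, Set.mem_setOf_eq, Set.mem_inter_iff,
        Set.mem_iInter]
    rw [this]
    refine (isClosed_eq (hev 0) continuous_const).inter
      ((isClosed_iInter fun g => isClosed_iInter fun h =>
        isClosed_le (hev (g - h)) ((hev g).max (hev h))).inter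
      ((isClosed_eq (hev 1) continuous_const).inter
      (isClosed_iInter fun g => isClosed_iInter fun h =>
        isClosed_eq (hev (g * h)) ((hev g).mul (hev h)))))
  exact ⟨hclosed, hclosed.isCompact⟩
end

section
/- Let R be a commutative ring equipped with a submultiplicative norm |·|, and let α be a multiplicative seminorm on R bounded above by |·|. Define the Gauss extension α_G on the polynomial ring R[T] by α_G(∑_i a_i T^i) = max_i α(a_i). Then α_G is a multiplicative seminorm on R[T], and it is bounded above by the Gauss norm on R[T] (the norm sending ∑_i a_i T^i to max_i |a_i|). -/
open scoped NNReal

/-- The Gauss extension of a function `α : R → ℝ≥0` to the polynomial ring `R[T]`: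
it sends `∑_i a_i T^i` to `max_i α (a_i)`. -/
noncomputable def gaussExtension {R : Type*} [CommRing R] (α : R → ℝ≥0)
    (f : Polynomial R) : ℝ≥0 :=
  f.support.sup fun i => α (f.coeff i)

section Aux

variable {R : Type*} [CommRing R]

lemma coeff_le_gauss {α : R → ℝ≥0} (h0 : α 0 = 0) (f : Polynomial R) (i : ℕ) :
    α (f.coeff i) ≤ gaussExtension α f := by
  by_cases hi : i ∈ f.support
  · exact Finset.le_sup (f := fun i => α (f.coeff i)) hi
  · simp [Polynomial.notMem_support_iff.mp hi, h0]

lemma gauss_le {α : R → ℝ≥0} (f : Polynomial R) {c : ℝ≥0}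
    (h : ∀ i, α (f.coeff i) ≤ c) : gaussExtension α f ≤ c :=
  Finset.sup_le fun i _ => h i

variable {α : R → ℝ≥0}

lemma alpha_neg (hα : IsMultSeminorm α) (g : R) : α (-g) = α g := by
  have key : ∀ x : R, α (-x) ≤ α x := by
    intro x
    have := hα.2.1 0 x
    simpa [hα.1] using this
  refine le_antisymm (key g) ?_
  simpa using key (-g)

lemma alpha_add_le (hα : IsMultSeminorm α) (g h : R) : α (g + h) ≤ max (α g) (α h) := by
  have := hα.2.1 g (-h)
  rw [sub_neg_eq_add, alpha_neg hα] at this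
  exact this

lemma alpha_sum_le (hα : IsMultSeminorm α) {ι : Type*} (s : Finset ι) (t : ι → R) :
    α (∑ i ∈ s, t i) ≤ s.sup fun i => α (t i) := by
  classical
  induction s using Finset.cons_induction with
  | empty => simp [hα.1]
  | cons a s ha ih =>
      rw [Finset.sum_cons, Finset.sup_cons]
      exact (alpha_add_le hα _ _).trans (max_le_max le_rfl ih)

lemma alpha_add_eq (hα : IsMultSeminorm α) {a b : R} (h : α b < α a) : α (a + b) = α a := by
  refine le_antisymm ((alpha_add_le hα a b).trans (by simp [h.le])) ?_
  by_contra hlt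
  push_neg at hlt
  have h1 : α a ≤ max (α (a + b)) (α b) := by
    have := hα.2.1 (a + b) b
    simpa using this
  exact absurd (h1.trans_lt (max_lt hlt h)) (lt_irrefl _)

end Aux

theorem gaussExtension_isMultSeminorm
    {R : Type*} [CommRing R] (ν : R → ℝ≥0) (hν : IsSubmultNorm ν)
    (α : R → ℝ≥0) (hα : IsMultSeminorm α) (hαb : ∀ r : R, α r ≤ ν r) :
    IsMultSeminorm (gaussExtension α) ∧
      ∀ f : Polynomial R, gaussExtension α f ≤ gaussExtension ν f := by
  classical
  obtain ⟨h0, hsub, h1, hmul⟩ := hα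
  have hα' : IsMultSeminorm α := ⟨h0, hsub, h1, hmul⟩
  have hnt : Nontrivial R := by
    refine ⟨1, 0, fun h => ?_⟩
    have : ν 1 = 0 := (hν.1 1).mpr h
    rw [hν.2.2.1] at this
    exact one_ne_zero this
  -- product upper bound
  have hle : ∀ f g : Polynomial R,
      gaussExtension α (f * g) ≤ gaussExtension α f * gaussExtension α g := by
    intro f g
    refine gauss_le _ fun k => ?_
    rw [Polynomial.coeff_mul]
    refine (alpha_sum_le hα' _ _).trans (Finset.sup_le fun p _ => ?_)
    rw [hmul]
    exact mul_le_mul' (coeff_le_gauss h0 f p.1) (coeff_le_gauss h0 g p.2)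
  refine ⟨⟨?_, ?_, ?_, ?_⟩, ?_⟩
  · simp [gaussExtension]
  · intro f g
    refine gauss_le _ fun i => ?_
    rw [Polynomial.coeff_sub]
    exact (hsub _ _).trans
      (max_le_max (coeff_le_gauss h0 f i) (coeff_le_gauss h0 g i))
  · refine le_antisymm (gauss_le _ fun i => ?_) ?_
    · rcases Nat.eq_zero_or_pos i with hi | hi
      · simp [hi, Polynomial.coeff_one, h1]
      · simp [Polynomial.coeff_one, Nat.pos_iff_ne_zero.mp hi, h0]
    · have := coeff_le_gauss h0 (1 : Polynomial R) 0
      simpa [Polynomial.coeff_one, h1] using this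
  · intro f g
    refine le_antisymm (hle f g) ?_
    by_cases hzero : gaussExtension α f * gaussExtension α g = 0
    · rw [hzero]
      exact zero_le
    have hf0 : gaussExtension α f ≠ 0 := fun h => hzero (by rw [h, zero_mul])
    have hg0 : gaussExtension α g ≠ 0 := fun h => hzero (by rw [h, mul_zero])
    have hfs : f.support.Nonempty := by
      rw [Finset.nonempty_iff_ne_empty]
      intro h
      exact hf0 (by simp [gaussExtension, h])
    have hgs : g.support.Nonempty := by
      rw [Finset.nonempty_iff_ne_empty]
      intro h
      exact hg0 (by simp [gaussExtension, h])
    have hexf : ∃ i, α (f.coeff i) = gaussExtension α f := by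
      obtain ⟨i, _, hi⟩ := Finset.exists_mem_eq_sup f.support hfs
        (fun i => α (f.coeff i))
      exact ⟨i, hi.symm⟩
    have hexg : ∃ j, α (g.coeff j) = gaussExtension α g := by
      obtain ⟨j, _, hj⟩ := Finset.exists_mem_eq_sup g.support hgs
        (fun j => α (g.coeff j))
      exact ⟨j, hj.symm⟩
    set i0 := Nat.find hexf with hi0def
    set j0 := Nat.find hexg with hj0def
    have hi0 : α (f.coeff i0) = gaussExtension α f := Nat.find_spec hexf
    have hj0 : α (g.coeff j0) = gaussExtension α g := Nat.find_spec hexg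
    have hi0min : ∀ i < i0, α (f.coeff i) < gaussExtension α f := fun i hi =>
      lt_of_le_of_ne (coeff_le_gauss h0 f i) (Nat.find_min hexf hi)
    have hj0min : ∀ j < j0, α (g.coeff j) < gaussExtension α g := fun j hj =>
      lt_of_le_of_ne (coeff_le_gauss h0 g j) (Nat.find_min hexg hj)
    set k := i0 + j0 with hk
    have hmem : (i0, j0) ∈ Finset.HasAntidiagonal.antidiagonal k := by
      simp [hk]
    have hsplit : (f * g).coeff k
        = f.coeff i0 * g.coeff j0
          + ∑ p ∈ (Finset.HasAntidiagonal.antidiagonal k).erase (i0, j0),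
              f.coeff p.1 * g.coeff p.2 := by
      rw [Polynomial.coeff_mul, ← Finset.add_sum_erase _ _ hmem]
    have hrest : α (∑ p ∈ (Finset.HasAntidiagonal.antidiagonal k).erase (i0, j0),
        f.coeff p.1 * g.coeff p.2)
        < gaussExtension α f * gaussExtension α g := by
      refine lt_of_le_of_lt (alpha_sum_le hα' _ _) ?_
      rw [Finset.sup_lt_iff (pos_iff_ne_zero.mpr hzero)]
      rintro ⟨i, j⟩ hp
      rw [Finset.mem_erase, Finset.HasAntidiagonal.mem_antidiagonal] at hp
      obtain ⟨hne, hij⟩ := hp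
      rw [hmul]
      have hcase : i < i0 ∨ j < j0 := by
        by_contra hc
        push_neg at hc
        obtain ⟨hi, hj⟩ := hc
        have : i = i0 := by omega
        have : j = j0 := by omega
        exact hne (by simp_all)
      rcases hcase with hi | hj
      · calc α (f.coeff i) * α (g.coeff j)
            ≤ α (f.coeff i) * gaussExtension α g :=
              mul_le_mul' le_rfl (coeff_le_gauss h0 g j)
          _ < gaussExtension α f * gaussExtension α g := by
              refine mul_lt_mul_of_pos_right (hi0min i hi) ?_
              exact pos_iff_ne_zero.mpr hg0
      · calc α (f.coeff i) * α (g.coeff j)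
            ≤ gaussExtension α f * α (g.coeff j) :=
              mul_le_mul' (coeff_le_gauss h0 f i) le_rfl
          _ < gaussExtension α f * gaussExtension α g := by
              refine mul_lt_mul_of_pos_left (hj0min j hj) ?_
              exact pos_iff_ne_zero.mpr hf0
    have hkey : α ((f * g).coeff k) = gaussExtension α f * gaussExtension α g := by
      rw [hsplit]
      have : α (f.coeff i0 * g.coeff j0)
          = gaussExtension α f * gaussExtension α g := by
        rw [hmul, hi0, hj0]
      rw [alpha_add_eq hα' (by rw [this]; exact hrest), this]
    calc gaussExtension α f * gaussExtension α g
        = α ((f * g).coeff k) := hkey.symm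
      _ ≤ gaussExtension α (f * g) := coeff_le_gauss h0 (f * g) k
  · intro f
    refine gauss_le _ fun i => ?_
    exact (hαb _).trans (coeff_le_gauss ((hν.1 0).mpr rfl) f i)
end

section
/- Let α be a multiplicative seminorm on the ring ℤ bounded above by the trivial norm. Then either α is the trivial norm (α(n) = 1 for all n ≠ 0 and α(0) = 0), or there exist a prime number p and a real number t ∈ [0,1) such that α(p^a m) = t^a for all integers a ≥ 0 and all integers m not divisible by p (with the convention t^0 = 1), and α(0) = 0. -/
open scoped NNReal

/-- The trivial norm on a ring: `0 ↦ 0` and every nonzero element to `1`. -/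
noncomputable def trivialNorm {A : Type*} [CommRing A] (a : A) : ℝ≥0 :=
  open scoped Classical in
  if a = 0 then 0 else 1

theorem mult_seminorm_on_int_classification
    (α : ℤ → ℝ≥0) (hα : IsMultSeminorm α)
    (hαb : ∀ n : ℤ, α n ≤ trivialNorm n) :
    ((∀ n : ℤ, n ≠ 0 → α n = 1) ∧ α 0 = 0) ∨
      ∃ p : ℕ, p.Prime ∧ ∃ t : ℝ≥0, t < 1 ∧
        (∀ (a : ℕ) (m : ℤ), ¬ ((p : ℤ) ∣ m) → α ((p : ℤ) ^ a * m) = t ^ a) ∧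
        α 0 = 0 := by
  obtain ⟨h0, hsub, h1, hmul⟩ := hα
  have hle1 : ∀ n : ℤ, α n ≤ 1 := by
    intro n
    refine le_trans (hαb n) ?_
    unfold trivialNorm
    split <;> simp
  have hge1 : ∀ n : ℤ, n ≠ 0 → ¬ (α n < 1) → α n = 1 := by
    intro n hn h
    exact le_antisymm (hle1 n) (not_lt.mp h)
  have hneg : ∀ m : ℤ, α (-m) = α m := by
    intro m
    have h₁ : α (0 - m) ≤ max (α 0) (α m) := hsub 0 m
    have h₂ : α (0 - (-m)) ≤ max (α 0) (α (-m)) := hsub 0 (-m)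
    simp [h0] at h₁ h₂
    exact le_antisymm h₁ h₂
  by_cases htriv : ∀ n : ℤ, n ≠ 0 → α n = 1
  · exact Or.inl ⟨htriv, h0⟩
  push_neg at htriv
  obtain ⟨n, hn0, hn1⟩ := htriv
  have hnlt : α n < 1 := lt_of_le_of_ne (hle1 n) hn1
  have hP : ∃ k : ℕ, 0 < k ∧ α (k : ℤ) < 1 := by
    refine ⟨n.natAbs, Int.natAbs_pos.mpr hn0, ?_⟩
    rcases Int.natAbs_eq n with h | h
    · rw [← h]; exact hnlt
    · rw [show ((n.natAbs : ℤ)) = -n by omega]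
      rw [hneg]; exact hnlt
  classical
  set p := Nat.find hP with hp_def
  obtain ⟨hp_pos, hp_lt⟩ : 0 < p ∧ α (p : ℤ) < 1 := Nat.find_spec hP
  have hmin : ∀ k : ℕ, 0 < k → k < p → α (k : ℤ) = 1 := by
    intro k hk hkp
    have := Nat.find_min hP hkp
    push_neg at this
    exact hge1 _ (by exact_mod_cast hk.ne') (not_lt.mpr (this hk))
  have hp_ne1 : p ≠ 1 := by
    intro h
    rw [h] at hp_lt
    simp [h1] at hp_lt
  have hp_prime : p.Prime := by
    rw [Nat.prime_def_lt]
    refine ⟨by omega, ?_⟩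
    intro m hm hdvd
    by_contra hm1
    have hm0 : m ≠ 0 := by
      rintro rfl
      simp at hdvd
      omega
    obtain ⟨k, hk⟩ := hdvd
    have hk0 : 0 < k := by
      rcases Nat.eq_zero_or_pos k with h | h
      · subst h; simp at hk; omega
      · exact h
    have hkp : k < p := by
      have hm2 : 2 ≤ m := by omega
      nlinarith
    have : α (p : ℤ) = 1 := by
      have : ((p : ℤ)) = (m : ℤ) * (k : ℤ) := by exact_mod_cast hk
      rw [this, hmul, hmin m (by omega) hm, hmin k hk0 hkp, one_mul]
    rw [this] at hp_lt
    exact lt_irrefl _ hp_lt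
  refine Or.inr ⟨p, hp_prime, α (p : ℤ), hp_lt, ?_, h0⟩
  -- key: if p does not divide m then α m = 1
  have hkey : ∀ m : ℤ, ¬ ((p : ℤ) ∣ m) → α m = 1 := by
    intro m hdvd
    have hp0 : (0 : ℤ) < (p : ℤ) := by exact_mod_cast hp_pos
    obtain ⟨q, r, hmr⟩ : ∃ q r : ℤ, r = m - (p : ℤ) * q ∧ r = m % (p : ℤ) :=
      ⟨m / (p : ℤ), m % (p : ℤ), by have := Int.emod_add_mul_ediv m (p : ℤ); omega, rfl⟩
    obtain ⟨heq', hr_def⟩ := hmr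
    have hr_pos : 0 < r := by
      have h1' : 0 ≤ m % (p : ℤ) := Int.emod_nonneg m hp0.ne'
      have h2' : m % (p : ℤ) ≠ 0 := fun h => hdvd (Int.dvd_of_emod_eq_zero h)
      omega
    have hr_lt : r < (p : ℤ) := hr_def ▸ Int.emod_lt_of_pos m hp0
    have hr1 : α r = 1 := by
      have h2 : r = ((r.toNat : ℕ) : ℤ) := by omega
      rw [h2]
      exact hmin r.toNat (by omega) (by omega)
    have heq : m - (p : ℤ) * q = r := heq'.symm
    have hpq : α ((p : ℤ) * q) < 1 := by
      rw [hmul]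
      calc α (p : ℤ) * α q ≤ α (p : ℤ) * 1 := by
            exact mul_le_mul_right (hle1 q) _
        _ < 1 := by rwa [mul_one]
    have hmax : (1 : ℝ≥0) ≤ max (α m) (α ((p : ℤ) * q)) := by
      have := hsub m ((p : ℤ) * q)
      rw [heq, hr1] at this
      exact this
    have : (1 : ℝ≥0) ≤ α m := by
      rcases le_max_iff.mp hmax with h | h
      · exact h
      · exact absurd h (not_le.mpr hpq)
    exact le_antisymm (hle1 m) this
  intro a m hdvd
  have hpow : ∀ b : ℕ, α ((p : ℤ) ^ b) = (α (p : ℤ)) ^ b := by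
    intro b
    induction b with
    | zero => simpa using h1
    | succ b ih => rw [pow_succ, pow_succ, hmul, ih]
  rw [hmul, hpow, hkey m hdvd, mul_one]
end

section
/- Let K be a field equipped with a multiplicative nonarchimedean norm |·|. Fix z ∈ K with |z| ≤ 1 and r ∈ [0,1]. Define α_{z,r} : K[T] → ℝ≥0 by α_{z,r}(f) = max_i r^i |(D_i f)(z)|, where D_i f denotes the i-th Hasse derivative of f (so that D_i f = (1/i!) d^i f/dT^i in characteristic zero). Then α_{z,r} is a multiplicative seminorm on K[T] bounded above by the Gauss norm (the norm sending ∑_i a_i T^i to max_i |a_i|). -/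
set_option linter.unusedSectionVars false


open scoped NNReal

/-- A multiplicative nonarchimedean norm on a field. -/
def IsMultNorm {K : Type*} [Field K] (ν : K → ℝ≥0) : Prop :=
  IsMultSeminorm ν ∧ ∀ x : K, ν x = 0 ↔ x = 0

/-- The Gauss norm on `K[T]`, sending `∑_i a_i T^i` to `max_i ν (a_i)`. -/
noncomputable def gaussNorm {K : Type*} [Field K] (ν : K → ℝ≥0)
    (f : Polynomial K) : ℝ≥0 :=
  f.support.sup fun i => ν (f.coeff i)

/-- The seminorm `α_{z,r}(f) = max_i r^i ν((D_i f)(z))`, where `D_i` is the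
`i`-th Hasse derivative. -/
noncomputable def discPointSeminorm {K : Type*} [Field K] (ν : K → ℝ≥0)
    (z : K) (r : ℝ≥0) (f : Polynomial K) : ℝ≥0 :=
  ⨆ i : ℕ, r ^ i * ν ((Polynomial.hasseDeriv i f).eval z)

namespace DPSAux

open Polynomial

variable {K : Type*} [Field K] {ν : K → ℝ≥0}

section NuFacts

variable (hν : IsMultNorm ν)
include hν

lemma nu_zero : ν 0 = 0 := hν.1.1
lemma nu_one : ν 1 = 1 := hν.1.2.2.1
lemma nu_mul (a b : K) : ν (a * b) = ν a * ν b := hν.1.2.2.2 a b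
lemma nu_sub_le (a b : K) : ν (a - b) ≤ max (ν a) (ν b) := hν.1.2.1 a b

lemma nu_neg (a : K) : ν (-a) = ν a := by
  refine le_antisymm ?_ ?_
  · simpa [nu_zero hν] using nu_sub_le hν 0 a
  · simpa [nu_zero hν] using nu_sub_le hν 0 (-a)

lemma nu_add_le (a b : K) : ν (a + b) ≤ max (ν a) (ν b) := by
  simpa [nu_neg hν, sub_neg_eq_add] using nu_sub_le hν a (-b)

lemma nu_add_eq (a b : K) (h : ν b < ν a) : ν (a + b) = ν a := by
  refine le_antisymm ((nu_add_le hν a b).trans (max_le le_rfl h.le)) ?_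
  have h2 : ν a ≤ max (ν (a + b)) (ν b) := by
    simpa using nu_sub_le hν (a + b) b
  rcases le_max_iff.mp h2 with h3 | h3
  · exact h3
  · exact absurd h3 (not_le.mpr h)

lemma nu_pow (a : K) (n : ℕ) : ν (a ^ n) = ν a ^ n := by
  induction n with
  | zero => simp [nu_one hν]
  | succ n ih => rw [pow_succ, pow_succ, nu_mul hν, ih]

lemma nu_natCast (n : ℕ) : ν (n : K) ≤ 1 := by
  induction n with
  | zero => simp [nu_zero hν]
  | succ n ih =>
      push_cast
      exact (nu_add_le hν _ _).trans (max_le ih (nu_one hν).le)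

lemma nu_sum_le {ι : Type*} (s : Finset ι) (F : ι → K) :
    ν (∑ i ∈ s, F i) ≤ s.sup fun i => ν (F i) := by
  classical
  induction s using Finset.cons_induction with
  | empty => simp [nu_zero hν]
  | cons a s ha ih =>
      rw [Finset.sum_cons, Finset.sup_cons]
      exact (nu_add_le hν _ _).trans (max_le_max le_rfl ih)

lemma nu_sum_eq {ι : Type*} (s : Finset ι) (F : ι → K) (x₀ : ι) (hx : x₀ ∈ s)
    (hpos : 0 < ν (F x₀)) (hlt : ∀ x ∈ s, x ≠ x₀ → ν (F x) < ν (F x₀)) :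
    ν (∑ x ∈ s, F x) = ν (F x₀) := by
  classical
  rw [← Finset.add_sum_erase s F hx]
  refine nu_add_eq hν _ _ ?_
  refine (nu_sum_le hν _ _).trans_lt ?_
  rw [Finset.sup_lt_iff hpos]
  intro b hb
  exact hlt b (Finset.mem_of_mem_erase hb) (Finset.ne_of_mem_erase hb)

end NuFacts

/-- Weighted Gauss norm with radius `r`. -/
noncomputable def wnorm (ν : K → ℝ≥0) (r : ℝ≥0) (f : K[X]) : ℝ≥0 :=
  ⨆ i : ℕ, r ^ i * ν (f.coeff i)

variable (hν : IsMultNorm ν) {r : ℝ≥0}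
include hν

lemma term_le_sup (f : K[X]) (i : ℕ) :
    r ^ i * ν (f.coeff i) ≤ f.support.sup fun j => r ^ j * ν (f.coeff j) := by
  by_cases h : i ∈ f.support
  · exact Finset.le_sup (f := fun j => r ^ j * ν (f.coeff j)) h
  · rw [Polynomial.notMem_support_iff.mp h, nu_zero hν, mul_zero]
    exact zero_le

lemma wnorm_eq_sup (f : K[X]) :
    wnorm ν r f = f.support.sup fun j => r ^ j * ν (f.coeff j) := by
  unfold wnorm
  refine le_antisymm (ciSup_le fun i => term_le_sup hν f i) ?_
  refine Finset.sup_le fun i _ => le_ciSup (f := fun i => r ^ i * ν (f.coeff i)) ?_ i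
  exact ⟨_, by rintro x ⟨i, rfl⟩; exact term_le_sup hν f i⟩

lemma le_wnorm (f : K[X]) (i : ℕ) : r ^ i * ν (f.coeff i) ≤ wnorm ν r f := by
  rw [wnorm_eq_sup hν]; exact term_le_sup hν f i

lemma wnorm_le {f : K[X]} {c : ℝ≥0} (h : ∀ i, r ^ i * ν (f.coeff i) ≤ c) :
    wnorm ν r f ≤ c :=
  ciSup_le h

lemma wnorm_zero : wnorm ν r (0 : K[X]) = 0 := by
  simp [wnorm, nu_zero hν]

lemma wnorm_one : wnorm ν r (1 : K[X]) = 1 := by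
  refine le_antisymm (wnorm_le hν fun i => ?_) ?_
  · rcases Nat.eq_zero_or_pos i with rfl | hi
    · simp [nu_one hν]
    · rw [Polynomial.coeff_one, if_neg hi.ne', nu_zero hν, mul_zero]
      exact zero_le
  · have := le_wnorm (r := r) hν (1 : K[X]) 0
    simpa [nu_one hν] using this

lemma wnorm_sub_le (f g : K[X]) :
    wnorm ν r (f - g) ≤ max (wnorm ν r f) (wnorm ν r g) := by
  refine wnorm_le hν fun i => ?_
  rw [Polynomial.coeff_sub]
  calc r ^ i * ν (f.coeff i - g.coeff i)
      ≤ r ^ i * max (ν (f.coeff i)) (ν (g.coeff i)) :=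
        mul_le_mul_right (nu_sub_le hν _ _) _
    _ = max (r ^ i * ν (f.coeff i)) (r ^ i * ν (g.coeff i)) := by
        rcases le_total (ν (f.coeff i)) (ν (g.coeff i)) with h | h
        · rw [max_eq_right h, max_eq_right (mul_le_mul_right h _)]
        · rw [max_eq_left h, max_eq_left (mul_le_mul_right h _)]
    _ ≤ max (wnorm ν r f) (wnorm ν r g) :=
        max_le_max (le_wnorm hν f i) (le_wnorm hν g i)

lemma exists_min_achieving (f : K[X]) (hf : wnorm ν r f ≠ 0) :
    ∃ i₀, r ^ i₀ * ν (f.coeff i₀) = wnorm ν r f ∧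
      ∀ i < i₀, r ^ i * ν (f.coeff i) < wnorm ν r f := by
  classical
  have hsupp : f.support.Nonempty := by
    rcases Finset.eq_empty_or_nonempty f.support with h | h
    · exact absurd (by rw [wnorm_eq_sup hν, h]; rfl) hf
    · exact h
  obtain ⟨b, hb, hbeq⟩ := Finset.exists_mem_eq_sup f.support hsupp
    fun j => r ^ j * ν (f.coeff j)
  have hP : ∃ i, r ^ i * ν (f.coeff i) = wnorm ν r f :=
    ⟨b, by rw [wnorm_eq_sup hν, hbeq]⟩
  refine ⟨Nat.find hP, Nat.find_spec hP, fun i hi => ?_⟩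
  exact lt_of_le_of_ne (le_wnorm hν f i) (Nat.find_min hP hi)

lemma wnorm_mul (p q : K[X]) :
    wnorm ν r (p * q) = wnorm ν r p * wnorm ν r q := by
  classical
  refine le_antisymm ?_ ?_
  · refine wnorm_le hν fun k => ?_
    rw [Polynomial.coeff_mul]
    calc r ^ k * ν (∑ x ∈ Finset.HasAntidiagonal.antidiagonal k, p.coeff x.1 * q.coeff x.2)
        ≤ r ^ k * (Finset.HasAntidiagonal.antidiagonal k).sup
            (fun x => ν (p.coeff x.1 * q.coeff x.2)) :=
          mul_le_mul_right (nu_sum_le hν _ _) _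
      _ = (Finset.HasAntidiagonal.antidiagonal k).sup
            (fun x => r ^ k * ν (p.coeff x.1 * q.coeff x.2)) :=
          NNReal.mul_finset_sup _ _ _
      _ ≤ wnorm ν r p * wnorm ν r q := by
          refine Finset.sup_le fun x hx => ?_
          have hs : x.1 + x.2 = k := Finset.HasAntidiagonal.mem_antidiagonal.mp hx
          rw [nu_mul hν, ← hs, pow_add, mul_mul_mul_comm]
          exact mul_le_mul' (le_wnorm hν p x.1) (le_wnorm hν q x.2)
  · by_cases hp : wnorm ν r p = 0
    · simp [hp]
    by_cases hq : wnorm ν r q = 0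
    · simp [hq]
    obtain ⟨i₀, hi₀, hpmin⟩ := exists_min_achieving hν p hp
    obtain ⟨j₀, hj₀, hqmin⟩ := exists_min_achieving hν q hq
    set k := i₀ + j₀ with hk
    have hmain : r ^ k * ν (p.coeff i₀ * q.coeff j₀) = wnorm ν r p * wnorm ν r q := by
      rw [nu_mul hν, hk, pow_add, mul_mul_mul_comm, hi₀, hj₀]
    have hpos : 0 < ν (p.coeff i₀ * q.coeff j₀) := by
      refine pos_iff_ne_zero.mpr fun h0 => ?_
      rw [h0, mul_zero] at hmain
      exact (mul_ne_zero hp hq) hmain.symm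
    have key : ν ((p * q).coeff k) = ν (p.coeff i₀ * q.coeff j₀) := by
      rw [Polynomial.coeff_mul]
      refine nu_sum_eq hν _ _ (i₀, j₀) (Finset.HasAntidiagonal.mem_antidiagonal.mpr rfl) hpos ?_
      intro x hx hne
      have hs : x.1 + x.2 = k := Finset.HasAntidiagonal.mem_antidiagonal.mp hx
      have hw : r ^ k * ν (p.coeff x.1 * q.coeff x.2)
          < r ^ k * ν (p.coeff i₀ * q.coeff j₀) := by
        rw [hmain, nu_mul hν, ← hs, pow_add, mul_mul_mul_comm]
        rcases lt_trichotomy x.1 i₀ with h1 | h1 | h1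
        · calc (r ^ x.1 * ν (p.coeff x.1)) * (r ^ x.2 * ν (q.coeff x.2))
              ≤ (r ^ x.1 * ν (p.coeff x.1)) * wnorm ν r q :=
                mul_le_mul_right (le_wnorm hν q x.2) _
            _ < wnorm ν r p * wnorm ν r q :=
                mul_lt_mul_of_pos_right (hpmin x.1 h1) (pos_iff_ne_zero.mpr hq)
        · exfalso
          apply hne
          have : x.2 = j₀ := by omega
          exact Prod.ext h1 this
        · have h2 : x.2 < j₀ := by omega
          calc (r ^ x.1 * ν (p.coeff x.1)) * (r ^ x.2 * ν (q.coeff x.2))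
              ≤ wnorm ν r p * (r ^ x.2 * ν (q.coeff x.2)) :=
                mul_le_mul_left (le_wnorm hν p x.1) _
            _ < wnorm ν r p * wnorm ν r q :=
                mul_lt_mul_of_pos_left (hqmin x.2 h2) (pos_iff_ne_zero.mpr hp)
      exact lt_of_mul_lt_mul_left hw (zero_le)
    calc wnorm ν r p * wnorm ν r q = r ^ k * ν ((p * q).coeff k) := by
          rw [key, hmain]
      _ ≤ wnorm ν r (p * q) := le_wnorm hν (p * q) k

lemma coeff_le_gauss (f : K[X]) (n : ℕ) : ν (f.coeff n) ≤ gaussNorm ν f := by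
  by_cases h : n ∈ f.support
  · exact Finset.le_sup (f := fun j => ν (f.coeff j)) h
  · rw [Polynomial.notMem_support_iff.mp h, nu_zero hν]
    exact zero_le

lemma disc_eq_wnorm (z : K) (f : K[X]) :
    discPointSeminorm ν z r f = wnorm ν r (Polynomial.taylor z f) := by
  unfold discPointSeminorm wnorm
  simp only [Polynomial.taylor_coeff]

end DPSAux

open DPSAux Polynomial

theorem discPointSeminorm_isMultSeminorm
    {K : Type*} [Field K] (ν : K → ℝ≥0) (hν : IsMultNorm ν)
    (z : K) (hz : ν z ≤ 1) (r : ℝ≥0) (hr : r ≤ 1) :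
    IsMultSeminorm (discPointSeminorm ν z r) ∧
      ∀ f : Polynomial K, discPointSeminorm ν z r f ≤ gaussNorm ν f := by
  refine ⟨⟨?_, ?_, ?_, ?_⟩, ?_⟩
  · rw [disc_eq_wnorm hν, map_zero, wnorm_zero hν]
  · intro f g
    rw [disc_eq_wnorm hν, disc_eq_wnorm hν, disc_eq_wnorm hν, map_sub]
    exact wnorm_sub_le hν _ _
  · rw [disc_eq_wnorm hν, taylor_one, Polynomial.C_1, wnorm_one hν]
  · intro f g
    rw [disc_eq_wnorm hν, disc_eq_wnorm hν, disc_eq_wnorm hν, taylor_mul,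
      wnorm_mul hν]
  · intro f
    rw [disc_eq_wnorm hν]
    refine wnorm_le hν fun i => ?_
    rw [Polynomial.taylor_coeff]
    calc r ^ i * ν ((hasseDeriv i f).eval z)
        ≤ 1 * ν ((hasseDeriv i f).eval z) :=
          mul_le_mul_left (pow_le_one' hr i) _
      _ = ν ((hasseDeriv i f).eval z) := one_mul _
      _ ≤ gaussNorm ν f := by
          rw [eval_eq_sum_range]
          refine (nu_sum_le hν _ _).trans (Finset.sup_le fun n _ => ?_)
          rw [nu_mul hν, hasseDeriv_coeff, nu_mul hν, nu_pow hν]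
          calc ν ((n + i).choose i : K) * ν (f.coeff (n + i)) * ν z ^ n
              ≤ 1 * ν (f.coeff (n + i)) * 1 :=
                mul_le_mul' (mul_le_mul_left (nu_natCast hν _) _)
                  (pow_le_one' hz n)
            _ = ν (f.coeff (n + i)) := by ring
            _ ≤ gaussNorm ν f := coeff_le_gauss hν f (n + i)
end

section
/- Let p be a prime and R a perfect 𝔽_p-algebra, equipped with the trivial norm. Let α be a multiplicative seminorm on R bounded above by the trivial norm. Define λ(α) : W(R) → ℝ≥0 by λ(α)(x) = sup_i p^{−i} α(x_i), where x = ∑_{i≥0} p^i [x_i] is the Teichmüller expansion of x (equivalently, x_i is the unique p^i-th root in R of the i-th Witt coordinate of x). Then λ(α) is a multiplicative seminorm on W(R) bounded above by the normalized p-adic norm. -/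
open scoped NNReal

/-- For `R` a perfect `𝔽_p`-algebra and `x ∈ W(R)` with Teichmüller expansion
`x = ∑_{i≥0} p^i [x_i]`, this is `x_i`: the unique `p^i`-th root in `R` of the
`i`-th Witt coordinate of `x`. -/
noncomputable def teichCoeff (p : ℕ) [Fact p.Prime] {R : Type*} [CommRing R]
    [ExpChar R p] [PerfectRing R p] (x : WittVector p R) (i : ℕ) : R :=
  (⇑(frobeniusEquiv R p).symm)^[i] (x.coeff i)

/-- The normalized `p`-adic norm on `W(R)`: it sends `0` to `0` and a nonzero
`x = ∑ p^i [x_i]` to `p^{-j}`, where `j` is the least index with `x_j ≠ 0`. -/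
noncomputable def padicNormWitt (p : ℕ) [Fact p.Prime] {R : Type*} [CommRing R]
    [ExpChar R p] [PerfectRing R p] (x : WittVector p R) : ℝ≥0 :=
  ⨆ i : ℕ, (p : ℝ≥0)⁻¹ ^ i * trivialNorm (teichCoeff p x i)

/-- The Gauss-type extension `λ(α)` of a seminorm `α` on `R` to `W(R)`:
`λ(α)(∑ p^i [x_i]) = sup_i p^{-i} α(x_i)`. -/
noncomputable def lambdaSeminorm (p : ℕ) [Fact p.Prime] {R : Type*} [CommRing R]
    [ExpChar R p] [PerfectRing R p] (α : R → ℝ≥0) (x : WittVector p R) : ℝ≥0 :=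
  ⨆ i : ℕ, (p : ℝ≥0)⁻¹ ^ i * α (teichCoeff p x i)

namespace LambdaAux

set_option linter.unusedSectionVars false

open MvPolynomial Finset

section Seminorm

variable {A : Type*} [CommRing A] {α : A → ℝ≥0} (hα : IsMultSeminorm α)

include hα

lemma alpha_zero : α 0 = 0 := hα.1
lemma alpha_one : α 1 = 1 := hα.2.2.1
lemma alpha_mul (a b : A) : α (a * b) = α a * α b := hα.2.2.2 a b
lemma alpha_sub_le (a b : A) : α (a - b) ≤ max (α a) (α b) := hα.2.1 a b

lemma alpha_neg (a : A) : α (-a) = α a := by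
  have h1 : α (-a) ≤ α a := by
    simpa [hα.1] using hα.2.1 0 a
  have h2 : α a ≤ α (-a) := by
    simpa [hα.1] using hα.2.1 0 (-a)
  exact le_antisymm h1 h2

lemma alpha_add_le (a b : A) : α (a + b) ≤ max (α a) (α b) := by
  have := hα.2.1 a (-b)
  rwa [sub_neg_eq_add, alpha_neg hα] at this

lemma alpha_pow (a : A) (n : ℕ) : α (a ^ n) = α a ^ n := by
  induction n with
  | zero => simpa using hα.2.2.1
  | succ n ih => rw [pow_succ, alpha_mul hα, ih, pow_succ]

lemma alpha_natCast_le_one (n : ℕ) : α (n : A) ≤ 1 := by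
  induction n with
  | zero => simp [hα.1]
  | succ n ih =>
    push_cast
    exact (alpha_add_le hα _ _).trans (by simp [ih, hα.2.2.1])

lemma alpha_intCast_le_one (k : ℤ) : α (k : A) ≤ 1 := by
  cases k with
  | ofNat n => simpa using alpha_natCast_le_one hα n
  | negSucc n =>
    rw [Int.cast_negSucc, alpha_neg hα]
    simpa using alpha_natCast_le_one hα (n + 1)

lemma alpha_intCast_mul_le (k : ℤ) (a : A) : α ((k : A) * a) ≤ α a := by
  rw [alpha_mul hα]
  calc α (k : A) * α a ≤ 1 * α a := mul_le_mul_left (alpha_intCast_le_one hα k) _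
  _ = α a := one_mul _

lemma alpha_prod {ι : Type*} (s : Finset ι) (f : ι → A) :
    α (∏ i ∈ s, f i) = ∏ i ∈ s, α (f i) := by
  classical
  induction s using Finset.induction_on with
  | empty => simpa using hα.2.2.1
  | insert _ _ hi ih => rw [Finset.prod_insert hi, Finset.prod_insert hi, alpha_mul hα, ih]

lemma mul_alpha_sum_le {ι : Type*} (s : Finset ι) (f : ι → A) (K M : ℝ≥0)
    (h : ∀ i ∈ s, K * α (f i) ≤ M) : K * α (∑ i ∈ s, f i) ≤ M := by
  classical
  induction s using Finset.induction_on with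
  | empty => simp [hα.1]
  | @insert a s ha ih =>
    rw [Finset.sum_insert ha]
    have hmax := alpha_add_le hα (f a) (∑ i ∈ s, f i)
    calc K * α (f a + ∑ i ∈ s, f i) ≤ K * max (α (f a)) (α (∑ i ∈ s, f i)) :=
          mul_le_mul_right hmax K
    _ ≤ M := by
        rcases max_cases (α (f a)) (α (∑ i ∈ s, f i)) with ⟨h1, _⟩ | ⟨h1, _⟩ <;> rw [h1]
        · exact h a (Finset.mem_insert_self a s)
        · exact ih (fun i hi => h i (Finset.mem_insert_of_mem hi))

end Seminorm


section Homog

variable {σ : Type*} {w : σ → ℕ}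

lemma wh_pow {φ : MvPolynomial σ ℤ} {m : ℕ}
    (h : φ.IsWeightedHomogeneous w m) (k : ℕ) :
    (φ ^ k).IsWeightedHomogeneous w (k * m) := by
  induction k with
  | zero => simpa using isWeightedHomogeneous_one ℤ w
  | succ k ih =>
    rw [pow_succ, add_mul, one_mul]
    exact ih.mul h

lemma wh_neg {φ : MvPolynomial σ ℤ} {m : ℕ}
    (h : φ.IsWeightedHomogeneous w m) : (-φ).IsWeightedHomogeneous w m := by
  intro d hd
  exact h (by simpa using hd)

lemma wh_of_C_mul {φ : MvPolynomial σ ℤ} {m : ℕ} {k : ℤ} (hk : k ≠ 0)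
    (h : (C k * φ).IsWeightedHomogeneous w m) : φ.IsWeightedHomogeneous w m := by
  intro d hd
  exact h (by rw [coeff_C_mul]; exact mul_ne_zero hk hd)

end Homog

section WittHomog

open scoped Witt

variable (p : ℕ) [hp : Fact p.Prime]

lemma rename_wittPolynomial_isWeightedHomogeneous (b : Fin 2) (n : ℕ) :
    (rename (Prod.mk b) (wittPolynomial p ℤ n)).IsWeightedHomogeneous
      (fun s : Fin 2 × ℕ => p ^ s.2) (p ^ n) := by
  rw [wittPolynomial, map_sum]
  apply IsWeightedHomogeneous.sum
  intro i hi
  rw [rename_monomial, Finsupp.mapDomain_single]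
  apply isWeightedHomogeneous_monomial
  rw [Finsupp.weight_apply, Finsupp.sum_single_index (by simp)]
  have : (p : ℕ) ^ (n - i) • p ^ i = p ^ (n - i + i) := by
    rw [smul_eq_mul, pow_add]
  rw [this, Nat.sub_add_cancel (by exact Nat.lt_succ_iff.mp (Finset.mem_range.mp hi))]

lemma wittSub_isWeightedHomogeneous (n : ℕ) :
    (WittVector.wittSub p n).IsWeightedHomogeneous (fun s : Fin 2 × ℕ => p ^ s.2) (p ^ n) := by
  induction n using Nat.strong_induction_on with
  | _ n ih =>
    have hbind : ∀ f : ℕ → MvPolynomial (Fin 2 × ℕ) ℤ, bind₁ f (wittPolynomial p ℤ n) =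
        ∑ i ∈ Finset.range (n + 1), C ((p : ℤ) ^ i) * f i ^ p ^ (n - i) := by
      intro f
      rw [wittPolynomial_eq_sum_C_mul_X_pow, map_sum]
      simp only [map_mul, bind₁_C_right, map_pow, bind₁_X_right]
    have key := wittStructureInt_prop p (X 0 - X 1 : MvPolynomial (Fin 2) ℤ) n
    rw [hbind, map_sub, bind₁_X_right, bind₁_X_right, Finset.sum_range_succ] at key
    simp only [Nat.sub_self, pow_zero, pow_one] at key
    have heq : C ((p : ℤ) ^ n) * wittStructureInt p (X 0 - X 1) n =
        (rename (Prod.mk (0 : Fin 2)) (wittPolynomial p ℤ n) - rename (Prod.mk (1 : Fin 2)) (wittPolynomial p ℤ n)) -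
          ∑ i ∈ Finset.range n,
            C ((p : ℤ) ^ i) * wittStructureInt p (X 0 - X 1) i ^ p ^ (n - i) := by
      rw [← key]; ring
    have hrhs : ((rename (Prod.mk (0 : Fin 2)) (wittPolynomial p ℤ n) - rename (Prod.mk (1 : Fin 2)) (wittPolynomial p ℤ n)) -
        ∑ i ∈ Finset.range n,
          C ((p : ℤ) ^ i) * wittStructureInt p (X 0 - X 1) i ^ p ^ (n - i)).IsWeightedHomogeneous
        (fun s : Fin 2 × ℕ => p ^ s.2) (p ^ n) := by
      rw [sub_eq_add_neg, sub_eq_add_neg]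
      apply IsWeightedHomogeneous.add
      · apply IsWeightedHomogeneous.add
        · exact rename_wittPolynomial_isWeightedHomogeneous p 0 n
        · exact wh_neg (rename_wittPolynomial_isWeightedHomogeneous p 1 n)
      · apply wh_neg
        apply IsWeightedHomogeneous.sum
        intro i hi
        have hin : i < n := Finset.mem_range.mp hi
        have h1 : (wittStructureInt p (X 0 - X 1) i ^ p ^ (n - i)).IsWeightedHomogeneous
            (fun s : Fin 2 × ℕ => p ^ s.2) (p ^ (n - i) * p ^ i) :=
          wh_pow (ih i hin) _
        have h2 : p ^ (n - i) * p ^ i = p ^ n := by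
          rw [← pow_add, Nat.sub_add_cancel hin.le]
        rw [h2] at h1
        simpa using (isWeightedHomogeneous_C (R := ℤ) (fun s : Fin 2 × ℕ => p ^ s.2)
          ((p : ℤ) ^ i)).mul h1
    rw [← heq] at hrhs
    exact wh_of_C_mul (by exact_mod_cast pow_ne_zero n hp.out.ne_zero) hrhs

end WittHomog


section Bound

variable {A : Type*} [CommRing A] {α : A → ℝ≥0}
variable (p : ℕ) [hp : Fact p.Prime]

lemma aeval_bound (hα : IsMultSeminorm α) {n : ℕ}
    {P : MvPolynomial (Fin 2 × ℕ) ℤ}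
    (hP : P.IsWeightedHomogeneous (fun s : Fin 2 × ℕ => p ^ s.2) (p ^ n))
    (hPv : ∀ s ∈ P.vars, s.2 ≤ n)
    (u : Fin 2 × ℕ → A) (B : Fin 2 × ℕ → ℝ≥0) (M : ℝ≥0)
    (hu : ∀ s : Fin 2 × ℕ, s.2 ≤ n → α (u s) ^ p ^ n = B s ^ p ^ s.2)
    (hB : ∀ s : Fin 2 × ℕ, s.2 ≤ n → (p : ℝ≥0)⁻¹ ^ s.2 * B s ≤ M) :
    (p : ℝ≥0)⁻¹ ^ n * α (aeval u P) ≤ M := by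
  classical
  set c : ℝ≥0 := (p : ℝ≥0)⁻¹ with hc
  have hp1 : (1 : ℝ≥0) ≤ (p : ℝ≥0) := by
    exact_mod_cast hp.out.one_lt.le
  have hc1 : c ≤ 1 := by
    rw [hc]
    exact inv_le_one_of_one_le₀ hp1
  have hpn : p ^ n ≠ 0 := pow_ne_zero n hp.out.ne_zero
  -- expand aeval as a sum over the support
  have hev : aeval u P = ∑ d ∈ P.support, ((P.coeff d : ℤ) : A) *
      ∏ s ∈ d.support, u s ^ d s := by
    rw [aeval_def, eval₂_eq]
    simp only [algebraMap_int_eq, eq_intCast]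
  rw [hev]
  apply mul_alpha_sum_le hα
  intro d hd
  -- the term for the monomial `d`
  have hvars : ∀ s ∈ d.support, s.2 ≤ n := by
    intro s hs
    exact hPv s ((mem_vars s).mpr ⟨d, hd, hs⟩)
  -- weight identity
  have hw : ∑ s ∈ d.support, d s * p ^ s.2 = p ^ n := by
    have := hP (mem_support_iff.mp hd)
    rw [Finsupp.weight_apply, Finsupp.sum] at this
    simpa [smul_eq_mul] using this
  have hterm : α (((P.coeff d : ℤ) : A) * ∏ s ∈ d.support, u s ^ d s) ≤
      ∏ s ∈ d.support, α (u s) ^ d s := by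
    refine (alpha_intCast_mul_le hα _ _).trans ?_
    rw [alpha_prod hα]
    apply le_of_eq
    exact Finset.prod_congr rfl fun s _ => alpha_pow hα _ _
  refine le_trans (mul_le_mul_right hterm (c ^ n)) ?_
  rw [← pow_le_pow_iff_left₀ zero_le zero_le hpn]
  calc (c ^ n * ∏ s ∈ d.support, α (u s) ^ d s) ^ p ^ n
      = c ^ (n * p ^ n) * ∏ s ∈ d.support, B s ^ (d s * p ^ s.2) := by
        rw [mul_pow, ← pow_mul, ← Finset.prod_pow]
        congr 1
        refine Finset.prod_congr rfl fun s hs => ?_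
        rw [← pow_mul, mul_comm (d s), pow_mul, hu s (hvars s hs), ← pow_mul,
          mul_comm (p ^ s.2)]
    _ ≤ c ^ (∑ s ∈ d.support, s.2 * (d s * p ^ s.2)) *
          ∏ s ∈ d.support, B s ^ (d s * p ^ s.2) := by
        apply mul_le_mul_left
        apply pow_le_pow_of_le_one (zero_le : 0 ≤ c) hc1
        calc ∑ s ∈ d.support, s.2 * (d s * p ^ s.2)
            ≤ ∑ s ∈ d.support, n * (d s * p ^ s.2) :=
              Finset.sum_le_sum fun s hs => Nat.mul_le_mul_right _ (hvars s hs)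
          _ = n * p ^ n := by rw [← Finset.mul_sum, hw]
    _ = ∏ s ∈ d.support, (c ^ s.2 * B s) ^ (d s * p ^ s.2) := by
        simp only [mul_pow, Finset.prod_mul_distrib, ← pow_mul, ← Finset.prod_pow_eq_pow_sum]
    _ ≤ ∏ s ∈ d.support, M ^ (d s * p ^ s.2) :=
        Finset.prod_le_prod' fun s hs => pow_le_pow_left' (hB s (hvars s hs)) _
    _ = M ^ p ^ n := by rw [Finset.prod_pow_eq_pow_sum, hw]

end Bound


section Ghost

variable {p : ℕ} [hp : Fact p.Prime]

lemma teich_isPoly : WittVector.IsPoly p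
    (fun {R} [CommRing R] (x : WittVector p R) => WittVector.teichmuller p (x.coeff 0)) := by
  refine ⟨⟨fun n => if n = 0 then X 0 else 0, ?_⟩⟩
  intro R _ x
  funext n
  cases n with
  | zero => simp [WittVector.teichmuller_coeff_zero]
  | succ n => simp [WittVector.teichmuller_coeff_pos p _ _ (Nat.succ_pos n)]

lemma shift_isPoly : WittVector.IsPoly p
    (fun {R} [CommRing R] (x : WittVector p R) => WittVector.mk p fun n => x.coeff (n + 1)) := by
  refine ⟨⟨fun n => X (n + 1), ?_⟩⟩
  intro R _ x
  funext n
  simp [WittVector.coeff_mk]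

lemma eq_teichmuller_add_verschiebung {R : Type*} [CommRing R] (x : WittVector p R) :
    x = WittVector.teichmuller p (x.coeff 0) +
      WittVector.verschiebung (WittVector.mk p fun n => x.coeff (n + 1)) := by
  haveI h1 := teich_isPoly (p := p)
  haveI h2 : WittVector.IsPoly p (fun {R} [CommRing R] (x : WittVector p R) =>
      WittVector.verschiebung (WittVector.mk p fun n => x.coeff (n + 1))) :=
    WittVector.IsPoly.comp (hg := WittVector.verschiebung_isPoly) (hf := shift_isPoly)
  haveI h3 : WittVector.IsPoly₂ p (fun {R} [CommRing R] (x y : WittVector p R) =>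
      WittVector.teichmuller p (x.coeff 0) +
        WittVector.verschiebung (WittVector.mk p fun n => y.coeff (n + 1))) :=
    WittVector.IsPoly₂.comp (hh := WittVector.addIsPoly₂) (hf := h1) (hg := h2)
  haveI h4 : WittVector.IsPoly p (fun {R} [CommRing R] (x : WittVector p R) =>
      WittVector.teichmuller p (x.coeff 0) +
        WittVector.verschiebung (WittVector.mk p fun n => x.coeff (n + 1))) :=
    WittVector.IsPoly₂.diag (hf := h3)
  ghost_calc x
  intro n
  rcases n with _ | n
  · simp only [WittVector.ghostComponent_apply, wittPolynomial_zero, aeval_X, map_add,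
      WittVector.ghostComponent_teichmuller, WittVector.ghostComponent_zero_verschiebung,
      pow_zero, pow_one, add_zero, WittVector.verschiebung_coeff_zero,
      WittVector.teichmuller_coeff_zero]
  · rw [map_add, WittVector.ghostComponent_teichmuller,
      WittVector.ghostComponent_verschiebung, WittVector.ghostComponent_apply,
      WittVector.ghostComponent_apply, aeval_wittPolynomial, aeval_wittPolynomial,
      Finset.sum_range_succ', Finset.mul_sum]
    simp only [WittVector.coeff_mk, Nat.succ_sub_succ, pow_zero, one_mul, Nat.sub_zero]
    rw [add_comm]
    congr 1
    refine Finset.sum_congr rfl fun i _ => ?_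
    ring
lemma teichmuller_mul_mk {R : Type*} [CommRing R] (x y : WittVector p R) :
    WittVector.teichmuller p (x.coeff 0) * y =
      WittVector.mk p fun n => x.coeff 0 ^ p ^ n * y.coeff n := by
  haveI h1 := teich_isPoly (p := p)
  haveI h5 : WittVector.IsPoly₂ p (fun {R} [CommRing R] (x y : WittVector p R) =>
      WittVector.teichmuller p (x.coeff 0) * y) :=
    WittVector.IsPoly₂.comp (hh := WittVector.mulIsPoly₂) (hf := h1)
      (hg := WittVector.idIsPolyI' p)
  haveI h6 : WittVector.IsPoly₂ p (fun {R} [CommRing R] (x y : WittVector p R) =>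
      WittVector.mk p fun n => x.coeff 0 ^ p ^ n * y.coeff n) := by
    refine ⟨⟨fun n => X (0, 0) ^ p ^ n * X (1, n), ?_⟩⟩
    intro R _ x y
    funext n
    simp [WittVector.peval, Function.uncurry, WittVector.coeff_mk]
  ghost_calc x y
  intro n
  rw [map_mul, WittVector.ghostComponent_teichmuller, WittVector.ghostComponent_apply,
    WittVector.ghostComponent_apply, aeval_wittPolynomial, aeval_wittPolynomial,
    Finset.mul_sum]
  refine Finset.sum_congr rfl fun i hi => ?_
  have hin : i ≤ n := Nat.lt_succ_iff.mp (Finset.mem_range.mp hi)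
  rw [WittVector.coeff_mk, mul_pow, ← pow_mul, ← pow_add,
    Nat.add_sub_cancel' hin]
  ring

end Ghost


set_option synthInstance.checkSynthOrder false in
local instance charP_of_prime_expChar {p : ℕ} [Fact p.Prime] {R : Type*}
    [AddMonoidWithOne R] [h : ExpChar R p] : CharP R p := by
  cases h with
  | zero => exact absurd (Fact.out : Nat.Prime 1) Nat.not_prime_one
  | prime _ => assumption

section Perfect

variable {p : ℕ} [hp : Fact p.Prime] {R : Type*} [CommRing R] [ExpChar R p] [PerfectRing R p]

lemma phi_iterate_frob_pow (a : R) (k : ℕ) :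
    (⇑(frobeniusEquiv R p).symm)^[k] (a ^ p ^ k) = a := by
  induction k generalizing a with
  | zero => simp
  | succ k ih =>
    rw [Function.iterate_succ_apply', pow_succ', pow_mul, ih (a ^ p),
      ← frobenius_def, frobeniusEquiv_symm_apply_frobenius]

lemma iterate_phi_pow (a : R) (k : ℕ) :
    ((⇑(frobeniusEquiv R p).symm)^[k] a) ^ p ^ k = a := by
  induction k generalizing a with
  | zero => simp
  | succ k ih =>
    rw [Function.iterate_succ_apply, pow_succ, pow_mul, ih ((frobeniusEquiv R p).symm a),
      frobeniusEquiv_symm_pow_p]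

lemma teichCoeff_pow (x : WittVector p R) (i : ℕ) :
    teichCoeff p x i ^ p ^ i = x.coeff i :=
  iterate_phi_pow (x.coeff i) i

lemma phi_iterate_mul (a b : R) (k : ℕ) :
    (⇑(frobeniusEquiv R p).symm)^[k] (a * b) =
      (⇑(frobeniusEquiv R p).symm)^[k] a * (⇑(frobeniusEquiv R p).symm)^[k] b := by
  induction k generalizing a b with
  | zero => simp
  | succ k ih =>
    rw [Function.iterate_succ_apply, map_mul, ih, Function.iterate_succ_apply,
      Function.iterate_succ_apply]

lemma phi_iterate_zero (k : ℕ) : (⇑(frobeniusEquiv R p).symm)^[k] (0 : R) = 0 :=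
  Function.iterate_fixed (map_zero _) k

lemma teichCoeff_zero_eq (x : WittVector p R) : teichCoeff p x 0 = x.coeff 0 := rfl

lemma teichCoeff_zeroW (i : ℕ) : teichCoeff p (0 : WittVector p R) i = 0 := by
  rw [teichCoeff, WittVector.zero_coeff, phi_iterate_zero]

lemma teichCoeff_oneW_zero : teichCoeff p (1 : WittVector p R) 0 = 1 := by
  rw [teichCoeff_zero_eq, WittVector.one_coeff_zero]

lemma teichCoeff_oneW_succ (i : ℕ) : teichCoeff p (1 : WittVector p R) (i + 1) = 0 := by
  rw [teichCoeff, WittVector.one_coeff_eq_of_pos _ _ _ (Nat.succ_pos i), phi_iterate_zero]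

lemma teichCoeff_teichmuller_zero (a : R) :
    teichCoeff p (WittVector.teichmuller p a) 0 = a := by
  rw [teichCoeff_zero_eq, WittVector.teichmuller_coeff_zero]

lemma teichCoeff_teichmuller_succ (a : R) (i : ℕ) :
    teichCoeff p (WittVector.teichmuller p a) (i + 1) = 0 := by
  rw [teichCoeff, WittVector.teichmuller_coeff_pos p a _ (Nat.succ_pos i), phi_iterate_zero]

lemma teichCoeff_mul_p_zero (x : WittVector p R) :
    teichCoeff p (x * (p : WittVector p R)) 0 = 0 := by
  rw [teichCoeff_zero_eq, WittVector.mul_charP_coeff_zero]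

lemma teichCoeff_mul_p_succ (x : WittVector p R) (i : ℕ) :
    teichCoeff p (x * (p : WittVector p R)) (i + 1) = teichCoeff p x i := by
  rw [teichCoeff, WittVector.mul_charP_coeff_succ, Function.iterate_succ_apply,
    ← frobenius_def, frobeniusEquiv_symm_apply_frobenius, teichCoeff]

lemma teichCoeff_teichmuller_mul (a : R) (y : WittVector p R) (n : ℕ) :
    teichCoeff p (WittVector.teichmuller p a * y) n = a * teichCoeff p y n := by
  have h := teichmuller_mul_mk (WittVector.teichmuller p a) y
  rw [WittVector.teichmuller_coeff_zero] at h
  rw [teichCoeff, h, WittVector.coeff_mk, phi_iterate_mul, phi_iterate_frob_pow, teichCoeff]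

lemma exists_decomp (x : WittVector p R) :
    ∃ r : WittVector p R, x = WittVector.teichmuller p (x.coeff 0) + r * (p : WittVector p R) ∧
      ∀ m, teichCoeff p r m = teichCoeff p x (m + 1) := by
  refine ⟨WittVector.mk p fun m => (frobeniusEquiv R p).symm (x.coeff (m + 1)), ?_, ?_⟩
  · have hF : WittVector.frobenius (WittVector.mk p
        fun m => (frobeniusEquiv R p).symm (x.coeff (m + 1))) =
        WittVector.mk p fun n => x.coeff (n + 1) := by
      apply WittVector.ext
      intro n
      rw [WittVector.coeff_frobenius_charP, WittVector.coeff_mk, WittVector.coeff_mk,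
        frobeniusEquiv_symm_pow_p]
    rw [← WittVector.verschiebung_frobenius, hF]
    exact eq_teichmuller_add_verschiebung x
  · intro m
    simp only [teichCoeff, WittVector.coeff_mk]
    rw [← Function.iterate_succ_apply]

lemma truncation (N : ℕ) (x : WittVector p R) :
    ∃ r : WittVector p R,
      x = (∑ i ∈ Finset.range N,
            WittVector.teichmuller p (teichCoeff p x i) * (p : WittVector p R) ^ i)
          + r * (p : WittVector p R) ^ N ∧
        ∀ m, teichCoeff p r m = teichCoeff p x (N + m) := by
  induction N with
  | zero => exact ⟨x, by simp, fun m => by rw [Nat.zero_add]⟩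
  | succ N ih =>
    obtain ⟨r, hr, hrt⟩ := ih
    obtain ⟨r', h1, h2⟩ := exists_decomp r
    refine ⟨r', ?_, ?_⟩
    · rw [Finset.sum_range_succ]
      have hc0 : r.coeff 0 = teichCoeff p x N := by
        rw [← teichCoeff_zero_eq, hrt 0, Nat.add_zero]
      conv_lhs => rw [hr, h1, hc0]
      ring
    · intro m
      rw [h2 m, hrt (m + 1)]
      congr 1
      omega

end Perfect


section Lambda

lemma trivialNorm_le_one {A : Type*} [CommRing A] (a : A) : trivialNorm a ≤ 1 := by
  rw [trivialNorm]
  split <;> simp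

variable {p : ℕ} [hp : Fact p.Prime] {R : Type*} [CommRing R] [ExpChar R p] [PerfectRing R p]
variable {α : R → ℝ≥0}

lemma c_le_one : ((p : ℝ≥0)⁻¹ : ℝ≥0) ≤ 1 :=
  inv_le_one_of_one_le₀ (by exact_mod_cast hp.out.one_lt.le)

lemma c_lt_one : ((p : ℝ≥0)⁻¹ : ℝ≥0) < 1 := by
  have h1 : (1 : ℝ≥0) < (p : ℝ≥0) := by exact_mod_cast hp.out.one_lt
  exact inv_lt_one_of_one_lt₀ h1

lemma phi_aeval (v : Fin 2 × ℕ → R) (P : MvPolynomial (Fin 2 × ℕ) ℤ) :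
    (frobeniusEquiv R p).symm (aeval v P) =
      aeval (fun s => (frobeniusEquiv R p).symm (v s)) P := by
  induction P using MvPolynomial.induction_on with
  | C a => simp only [aeval_C, algebraMap_int_eq, eq_intCast, map_intCast]
  | add f g hf hg => simp only [map_add, hf, hg]
  | mul_X f i hf => simp only [map_mul, hf, aeval_X]

lemma phi_iterate_aeval (k : ℕ) (v : Fin 2 × ℕ → R) (P : MvPolynomial (Fin 2 × ℕ) ℤ) :
    (⇑(frobeniusEquiv R p).symm)^[k] (aeval v P) =
      aeval (fun s => (⇑(frobeniusEquiv R p).symm)^[k] (v s)) P := by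
  induction k generalizing v with
  | zero => simp
  | succ k ih =>
    rw [Function.iterate_succ_apply, phi_aeval, ih]
    simp only [← Function.iterate_succ_apply]

lemma teichCoeff_sub (x y : WittVector p R) (n : ℕ) :
    teichCoeff p (x - y) n =
      aeval (fun s : Fin 2 × ℕ =>
        (⇑(frobeniusEquiv R p).symm)^[n] (Function.uncurry ![x.coeff, y.coeff] s))
        (WittVector.wittSub p n) := by
  rw [teichCoeff, WittVector.sub_coeff, WittVector.peval, phi_iterate_aeval]


section WithAlpha

variable (hα : IsMultSeminorm α) (hαb : ∀ r : R, α r ≤ trivialNorm r)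

include hα hαb

lemma alpha_le_one (r : R) : α r ≤ 1 := (hαb r).trans (trivialNorm_le_one r)

lemma term_le_one (x : WittVector p R) (i : ℕ) :
    (p : ℝ≥0)⁻¹ ^ i * α (teichCoeff p x i) ≤ 1 :=
  mul_le_one' (pow_le_one₀ zero_le c_le_one) (alpha_le_one hα hαb _)

lemma lam_bdd (x : WittVector p R) :
    BddAbove (Set.range fun i => (p : ℝ≥0)⁻¹ ^ i * α (teichCoeff p x i)) := by
  refine ⟨1, ?_⟩
  rintro _ ⟨i, rfl⟩
  exact term_le_one hα hαb x i

lemma le_lam (x : WittVector p R) (i : ℕ) :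
    (p : ℝ≥0)⁻¹ ^ i * α (teichCoeff p x i) ≤ lambdaSeminorm p α x :=
  le_ciSup (lam_bdd hα hαb x) i

lemma lam_le {x : WittVector p R} {M : ℝ≥0}
    (h : ∀ i, (p : ℝ≥0)⁻¹ ^ i * α (teichCoeff p x i) ≤ M) :
    lambdaSeminorm p α x ≤ M :=
  ciSup_le h

lemma lam_le_one (x : WittVector p R) : lambdaSeminorm p α x ≤ 1 :=
  lam_le hα hαb fun i => term_le_one hα hαb x i

lemma lam_zero : lambdaSeminorm p α (0 : WittVector p R) = 0 :=
  le_antisymm (ciSup_le fun i => by simp [teichCoeff_zeroW, hα.1]) zero_le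

lemma lam_one : lambdaSeminorm p α (1 : WittVector p R) = 1 := by
  refine le_antisymm (lam_le hα hαb fun i => ?_) ?_
  · cases i with
    | zero => simpa [teichCoeff_oneW_zero] using hα.2.2.1.le
    | succ i => simp [teichCoeff_oneW_succ, hα.1]
  · have h := le_lam hα hαb (1 : WittVector p R) 0
    rwa [pow_zero, one_mul, teichCoeff_oneW_zero, hα.2.2.1] at h

lemma lam_teichmuller (a : R) :
    lambdaSeminorm p α (WittVector.teichmuller p a) = α a := by
  refine le_antisymm (lam_le hα hαb fun i => ?_) ?_
  · cases i with
    | zero => simp [teichCoeff_teichmuller_zero]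
    | succ i => simp [teichCoeff_teichmuller_succ, hα.1]
  · have h := le_lam hα hαb (WittVector.teichmuller p a) 0
    rwa [pow_zero, one_mul, teichCoeff_teichmuller_zero] at h

lemma lam_mul_p (x : WittVector p R) :
    lambdaSeminorm p α (x * (p : WittVector p R)) = (p : ℝ≥0)⁻¹ * lambdaSeminorm p α x := by
  apply le_antisymm
  · apply lam_le hα hαb
    intro i
    cases i with
    | zero => simp [teichCoeff_mul_p_zero, hα.1]
    | succ i =>
      rw [teichCoeff_mul_p_succ]
      calc (p : ℝ≥0)⁻¹ ^ (i + 1) * α (teichCoeff p x i)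
          = (p : ℝ≥0)⁻¹ * ((p : ℝ≥0)⁻¹ ^ i * α (teichCoeff p x i)) := by ring
        _ ≤ (p : ℝ≥0)⁻¹ * lambdaSeminorm p α x := mul_le_mul_right (le_lam hα hαb x i) _
  · rw [lambdaSeminorm, NNReal.mul_iSup]
    apply ciSup_le
    intro i
    calc (p : ℝ≥0)⁻¹ * ((p : ℝ≥0)⁻¹ ^ i * α (teichCoeff p x i))
        = (p : ℝ≥0)⁻¹ ^ (i + 1) * α (teichCoeff p (x * (p : WittVector p R)) (i + 1)) := by
          rw [teichCoeff_mul_p_succ]; ring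
      _ ≤ lambdaSeminorm p α (x * (p : WittVector p R)) := le_lam hα hαb _ _

lemma lam_mul_p_pow (x : WittVector p R) (k : ℕ) :
    lambdaSeminorm p α (x * (p : WittVector p R) ^ k) =
      (p : ℝ≥0)⁻¹ ^ k * lambdaSeminorm p α x := by
  induction k with
  | zero => simp
  | succ k ih =>
    have : x * (p : WittVector p R) ^ (k + 1) = (x * (p : WittVector p R) ^ k) * p := by ring
    rw [this, lam_mul_p hα hαb, ih, pow_succ]
    ring

lemma lam_teichmuller_mul (a : R) (y : WittVector p R) :
    lambdaSeminorm p α (WittVector.teichmuller p a * y) = α a * lambdaSeminorm p α y := by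
  rw [lambdaSeminorm, lambdaSeminorm, NNReal.mul_iSup]
  congr 1
  funext i
  rw [teichCoeff_teichmuller_mul, hα.2.2.2]
  ring

lemma alpha_phi_iterate (w : R) (k : ℕ) :
    α ((⇑(frobeniusEquiv R p).symm)^[k] w) ^ p ^ k = α w := by
  rw [← alpha_pow hα, iterate_phi_pow]

lemma lam_sub_le (x y : WittVector p R) :
    lambdaSeminorm p α (x - y) ≤ max (lambdaSeminorm p α x) (lambdaSeminorm p α y) := by
  apply lam_le hα hαb
  intro n
  rw [teichCoeff_sub]
  refine aeval_bound p hα (wittSub_isWeightedHomogeneous p n) ?_ _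
    (fun s => α (teichCoeff p (![x, y] s.1) s.2)) _ ?_ ?_
  · intro s hs
    have h := WittVector.wittSub_vars p n hs
    exact Nat.lt_succ_iff.mp (Finset.mem_range.mp (Finset.mem_product.mp h).2)
  · rintro ⟨b, i⟩ hi
    have h1 : Function.uncurry ![x.coeff, y.coeff] (b, i) = (![x, y] b).coeff i := by
      rw [WittVector.v2_coeff]
      rfl
    rw [h1, alpha_phi_iterate hα hαb, ← alpha_pow hα, teichCoeff_pow]
  · rintro ⟨b, i⟩ _
    fin_cases b
    · simpa using (le_lam hα hαb x i).trans (le_max_left _ _)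
    · simpa using (le_lam hα hαb y i).trans (le_max_right _ _)

lemma lam_neg_le (y : WittVector p R) :
    lambdaSeminorm p α (-y) ≤ lambdaSeminorm p α y := by
  have h := lam_sub_le hα hαb (0 : WittVector p R) y
  rwa [zero_sub, lam_zero hα hαb, max_eq_right zero_le] at h

lemma lam_add_le (x y : WittVector p R) :
    lambdaSeminorm p α (x + y) ≤ max (lambdaSeminorm p α x) (lambdaSeminorm p α y) := by
  have h := lam_sub_le hα hαb x (-y)
  rw [sub_neg_eq_add] at h
  exact h.trans (max_le_max le_rfl (lam_neg_le hα hαb y))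

lemma lam_sum_le {ι : Type*} (s : Finset ι) (f : ι → WittVector p R) (M : ℝ≥0)
    (h : ∀ i ∈ s, lambdaSeminorm p α (f i) ≤ M) :
    lambdaSeminorm p α (∑ i ∈ s, f i) ≤ M := by
  classical
  induction s using Finset.induction_on with
  | empty => simp [lam_zero hα hαb]
  | @insert a s ha ih =>
    rw [Finset.sum_insert ha]
    refine (lam_add_le hα hαb _ _).trans (max_le ?_ ?_)
    · exact h a (Finset.mem_insert_self a s)
    · exact ih fun i hi => h i (Finset.mem_insert_of_mem hi)

lemma lam_le_padic (x : WittVector p R) :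
    lambdaSeminorm p α x ≤ padicNormWitt p x := by
  rw [lambdaSeminorm, padicNormWitt]
  refine ciSup_mono ?_ ?_
  · refine ⟨1, ?_⟩
    rintro _ ⟨i, rfl⟩
    exact mul_le_one' (pow_le_one₀ zero_le c_le_one) (trivialNorm_le_one _)
  · intro i
    exact mul_le_mul_right (hαb _) _

lemma lam_mul_le (x y : WittVector p R) :
    lambdaSeminorm p α (x * y) ≤ lambdaSeminorm p α x * lambdaSeminorm p α y := by
  have key : ∀ N : ℕ, lambdaSeminorm p α (x * y) ≤
      max (lambdaSeminorm p α x * lambdaSeminorm p α y) ((p : ℝ≥0)⁻¹ ^ N) := by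
    intro N
    obtain ⟨r, hr, hrt⟩ := truncation N x
    have hxy : x * y =
        (∑ i ∈ Finset.range N,
          (WittVector.teichmuller p (teichCoeff p x i) * y) * (p : WittVector p R) ^ i)
          + (r * y) * (p : WittVector p R) ^ N := by
      conv_lhs => rw [hr]
      rw [add_mul, Finset.sum_mul]
      congr 1
      · exact Finset.sum_congr rfl fun i _ => by ring
      · ring
    rw [hxy]
    refine (lam_add_le hα hαb _ _).trans (max_le ?_ ?_)
    · refine le_max_of_le_left ?_
      refine lam_sum_le hα hαb _ _ _ fun i _ => ?_
      rw [lam_mul_p_pow hα hαb, lam_teichmuller_mul hα hαb]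
      calc (p : ℝ≥0)⁻¹ ^ i * (α (teichCoeff p x i) * lambdaSeminorm p α y)
          = ((p : ℝ≥0)⁻¹ ^ i * α (teichCoeff p x i)) * lambdaSeminorm p α y := by ring
        _ ≤ lambdaSeminorm p α x * lambdaSeminorm p α y :=
            mul_le_mul_left (le_lam hα hαb x i) _
    · refine le_max_of_le_right ?_
      rw [lam_mul_p_pow hα hαb]
      calc (p : ℝ≥0)⁻¹ ^ N * lambdaSeminorm p α (r * y)
          ≤ (p : ℝ≥0)⁻¹ ^ N * 1 := mul_le_mul_right (lam_le_one hα hαb _) _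
        _ = (p : ℝ≥0)⁻¹ ^ N := mul_one _
  by_contra hcon
  push_neg at hcon
  have hpos : 0 < lambdaSeminorm p α (x * y) := lt_of_le_of_lt zero_le hcon
  obtain ⟨N, hN⟩ := exists_pow_lt_of_lt_one hpos (c_lt_one (p := p) (hp := hp))
  exact absurd (key N) (not_le.mpr (max_lt hcon hN))

lemma lam_attained (x : WittVector p R) (hx : 0 < lambdaSeminorm p α x) :
    ∃ j, ((p : ℝ≥0)⁻¹ ^ j * α (teichCoeff p x j) = lambdaSeminorm p α x) ∧
      ∀ i < j, (p : ℝ≥0)⁻¹ ^ i * α (teichCoeff p x i) < lambdaSeminorm p α x := by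
  classical
  have hex : ∃ i, (p : ℝ≥0)⁻¹ ^ i * α (teichCoeff p x i) = lambdaSeminorm p α x := by
    by_contra hno
    push_neg at hno
    have hlt : ∀ i, (p : ℝ≥0)⁻¹ ^ i * α (teichCoeff p x i) < lambdaSeminorm p α x :=
      fun i => lt_of_le_of_ne (le_lam hα hαb x i) (hno i)
    obtain ⟨N, hN⟩ := exists_pow_lt_of_lt_one hx (c_lt_one (p := p) (hp := hp))
    have hle : lambdaSeminorm p α x ≤
        max ((Finset.range (N + 1)).sup fun i => (p : ℝ≥0)⁻¹ ^ i * α (teichCoeff p x i))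
          ((p : ℝ≥0)⁻¹ ^ N) := by
      apply lam_le hα hαb
      intro i
      rcases le_or_gt i N with h | h
      · exact le_max_of_le_left (Finset.le_sup
          (f := fun i => (p : ℝ≥0)⁻¹ ^ i * α (teichCoeff p x i))
          (Finset.mem_range.mpr (Nat.lt_succ_of_le h)))
      · refine le_max_of_le_right ?_
        calc (p : ℝ≥0)⁻¹ ^ i * α (teichCoeff p x i)
            ≤ (p : ℝ≥0)⁻¹ ^ i * 1 := mul_le_mul_right (alpha_le_one hα hαb _) _
          _ = (p : ℝ≥0)⁻¹ ^ i := mul_one _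
          _ ≤ (p : ℝ≥0)⁻¹ ^ N := pow_le_pow_of_le_one zero_le c_le_one h.le
    have hsup : ((Finset.range (N + 1)).sup fun i =>
        (p : ℝ≥0)⁻¹ ^ i * α (teichCoeff p x i)) < lambdaSeminorm p α x := by
      refine (Finset.sup_lt_iff (show (⊥ : ℝ≥0) < lambdaSeminorm p α x from hx)).mpr ?_
      intro i _
      exact hlt i
    exact absurd hle (not_le.mpr (max_lt hsup hN))
  exact ⟨Nat.find hex, Nat.find_spec hex,
    fun i hij => lt_of_le_of_ne (le_lam hα hαb x i) (Nat.find_min hex hij)⟩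

lemma lam_mul_ge (x y : WittVector p R) :
    lambdaSeminorm p α x * lambdaSeminorm p α y ≤ lambdaSeminorm p α (x * y) := by
  rcases eq_or_lt_of_le (zero_le : 0 ≤ lambdaSeminorm p α x) with hx | hx
  · rw [← hx, zero_mul]; exact zero_le
  rcases eq_or_lt_of_le (zero_le : 0 ≤ lambdaSeminorm p α y) with hy | hy
  · rw [← hy, mul_zero]; exact zero_le
  obtain ⟨j, hjx, hjmin⟩ := lam_attained hα hαb x hx
  obtain ⟨k, hky, hkmin⟩ := lam_attained hα hαb y hy
  obtain ⟨r, hr, hrt⟩ := truncation j x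
  obtain ⟨s, hs, hst⟩ := truncation k y
  set u := ∑ i ∈ Finset.range j,
    WittVector.teichmuller p (teichCoeff p x i) * (p : WittVector p R) ^ i with hu
  set v := ∑ i ∈ Finset.range k,
    WittVector.teichmuller p (teichCoeff p y i) * (p : WittVector p R) ^ i with hv
  have hu_lt : lambdaSeminorm p α u < lambdaSeminorm p α x := by
    have h1 : lambdaSeminorm p α u ≤
        (Finset.range j).sup fun i => (p : ℝ≥0)⁻¹ ^ i * α (teichCoeff p x i) := by
      refine lam_sum_le hα hαb _ _ _ fun i hi => ?_
      rw [lam_mul_p_pow hα hαb, lam_teichmuller hα hαb _]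
      exact Finset.le_sup (f := fun i => (p : ℝ≥0)⁻¹ ^ i * α (teichCoeff p x i)) hi
    refine lt_of_le_of_lt h1 ?_
    refine (Finset.sup_lt_iff (show (⊥ : ℝ≥0) < lambdaSeminorm p α x from hx)).mpr ?_
    intro i hi
    exact hjmin i (Finset.mem_range.mp hi)
  have hv_lt : lambdaSeminorm p α v < lambdaSeminorm p α y := by
    have h1 : lambdaSeminorm p α v ≤
        (Finset.range k).sup fun i => (p : ℝ≥0)⁻¹ ^ i * α (teichCoeff p y i) := by
      refine lam_sum_le hα hαb _ _ _ fun i hi => ?_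
      rw [lam_mul_p_pow hα hαb, lam_teichmuller hα hαb _]
      exact Finset.le_sup (f := fun i => (p : ℝ≥0)⁻¹ ^ i * α (teichCoeff p y i)) hi
    refine lt_of_le_of_lt h1 ?_
    refine (Finset.sup_lt_iff (show (⊥ : ℝ≥0) < lambdaSeminorm p α y from hy)).mpr ?_
    intro i hi
    exact hkmin i (Finset.mem_range.mp hi)
  have hcjr : (p : ℝ≥0)⁻¹ ^ j * lambdaSeminorm p α r ≤ lambdaSeminorm p α x := by
    have hrp : r * (p : WittVector p R) ^ j = x - u := by rw [hr]; ring
    rw [← lam_mul_p_pow hα hαb, hrp]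
    exact (lam_sub_le hα hαb x u).trans (max_le le_rfl hu_lt.le)
  have h1 : lambdaSeminorm p α (u * y) <
      lambdaSeminorm p α x * lambdaSeminorm p α y :=
    lt_of_le_of_lt (lam_mul_le hα hαb u y) (mul_lt_mul_of_pos_right hu_lt hy)
  have h2 : lambdaSeminorm p α ((r * v) * (p : WittVector p R) ^ j) <
      lambdaSeminorm p α x * lambdaSeminorm p α y := by
    rw [lam_mul_p_pow hα hαb]
    calc (p : ℝ≥0)⁻¹ ^ j * lambdaSeminorm p α (r * v)
        ≤ (p : ℝ≥0)⁻¹ ^ j * (lambdaSeminorm p α r * lambdaSeminorm p α v) :=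
          mul_le_mul_right (lam_mul_le hα hαb r v) _
      _ = ((p : ℝ≥0)⁻¹ ^ j * lambdaSeminorm p α r) * lambdaSeminorm p α v := by ring
      _ ≤ lambdaSeminorm p α x * lambdaSeminorm p α v := mul_le_mul_left hcjr _
      _ < lambdaSeminorm p α x * lambdaSeminorm p α y := mul_lt_mul_of_pos_left hv_lt hx
  have h3 : lambdaSeminorm p α x * lambdaSeminorm p α y ≤
      lambdaSeminorm p α ((r * s) * (p : WittVector p R) ^ (j + k)) := by
    rw [lam_mul_p_pow hα hαb]
    have hrs0 : teichCoeff p (r * s) 0 = teichCoeff p x j * teichCoeff p y k := by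
      rw [teichCoeff_zero_eq, WittVector.mul_coeff_zero, ← teichCoeff_zero_eq,
        ← teichCoeff_zero_eq, hrt 0, hst 0, Nat.add_zero, Nat.add_zero]
    have hge : α (teichCoeff p x j) * α (teichCoeff p y k) ≤ lambdaSeminorm p α (r * s) := by
      have h := le_lam hα hαb (r * s) 0
      rw [pow_zero, one_mul, hrs0, hα.2.2.2] at h
      exact h
    calc lambdaSeminorm p α x * lambdaSeminorm p α y
        = ((p : ℝ≥0)⁻¹ ^ j * α (teichCoeff p x j)) *
            ((p : ℝ≥0)⁻¹ ^ k * α (teichCoeff p y k)) := by rw [hjx, hky]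
      _ = (p : ℝ≥0)⁻¹ ^ (j + k) * (α (teichCoeff p x j) * α (teichCoeff p y k)) := by
          rw [pow_add]; ring
      _ ≤ (p : ℝ≥0)⁻¹ ^ (j + k) * lambdaSeminorm p α (r * s) := mul_le_mul_right hge _
  have hxy : x * y = ((r * s) * (p : WittVector p R) ^ (j + k)) +
      (u * y + (r * v) * (p : WittVector p R) ^ j) := by
    rw [hr, hs, pow_add]
    ring
  have hE : lambdaSeminorm p α (u * y + (r * v) * (p : WittVector p R) ^ j) <
      lambdaSeminorm p α x * lambdaSeminorm p α y :=
    lt_of_le_of_lt (lam_add_le hα hαb _ _) (max_lt h1 h2)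
  have hT : lambdaSeminorm p α ((r * s) * (p : WittVector p R) ^ (j + k)) ≤
      max (lambdaSeminorm p α (x * y))
        (lambdaSeminorm p α (u * y + (r * v) * (p : WittVector p R) ^ j)) := by
    have heq : (r * s) * (p : WittVector p R) ^ (j + k) =
        x * y - (u * y + (r * v) * (p : WittVector p R) ^ j) := by
      rw [hxy]; ring
    rw [heq]
    exact lam_sub_le hα hαb _ _
  rcases le_total (lambdaSeminorm p α (u * y + (r * v) * (p : WittVector p R) ^ j))
      (lambdaSeminorm p α (x * y)) with hmax | hmax
  · exact h3.trans (hT.trans (max_le le_rfl hmax))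
  · exact absurd (h3.trans (hT.trans (max_le hmax le_rfl))) (not_le.mpr hE)

end WithAlpha

end Lambda

end LambdaAux

theorem lambdaSeminorm_isMultSeminorm (p : ℕ) [Fact p.Prime] {R : Type*}
    [CommRing R] [ExpChar R p] [PerfectRing R p]
    (α : R → ℝ≥0) (hα : IsMultSeminorm α) (hαb : ∀ r : R, α r ≤ trivialNorm r) :
    IsMultSeminorm (lambdaSeminorm p α) ∧
      ∀ x : WittVector p R, lambdaSeminorm p α x ≤ padicNormWitt p x := by
  refine ⟨⟨LambdaAux.lam_zero hα hαb, fun g h => LambdaAux.lam_sub_le hα hαb g h,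
    LambdaAux.lam_one hα hαb, fun g h => le_antisymm (LambdaAux.lam_mul_le hα hαb g h)
      (LambdaAux.lam_mul_ge hα hαb g h)⟩, fun x => LambdaAux.lam_le_padic hα hαb x⟩
end

section
/- Let p be a prime and R a perfect 𝔽_p-algebra. Equip W(R) with the normalized p-adic norm, and let β be a multiplicative seminorm on W(R) bounded above by this norm. Define μ(β) : R → ℝ≥0 by μ(β)(x) = β([x]), where [·] is the Teichmüller map. Then μ(β) is a multiplicative seminorm on R bounded above by the trivial norm. -/
open scoped NNReal

/-- The map `μ` on seminorms: `μ(β)(x) = β([x])`, with `[·]` the Teichmüller map. -/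
noncomputable def muSeminorm (p : ℕ) [Fact p.Prime] {R : Type*} [CommRing R]
    (β : WittVector p R → ℝ≥0) (x : R) : ℝ≥0 :=
  β (WittVector.teichmuller p x)

section Aux
variable (p : ℕ) [Fact p.Prime] {R : Type*} [CommRing R] [ExpChar R p] [PerfectRing R p]

lemma trivialNorm_le_one {A : Type*} [CommRing A] (a : A) : trivialNorm a ≤ 1 := by
  unfold trivialNorm; split <;> simp

lemma pinv_le_one : ((p : ℝ≥0))⁻¹ ≤ 1 := by
  have : (1 : ℝ≥0) ≤ p := by exact_mod_cast (Fact.out : p.Prime).one_lt.le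
  exact inv_le_one_of_one_le₀ this

lemma padicNormWitt_le_pinv (z : WittVector p R) (hz : z.coeff 0 = 0) :
    padicNormWitt p z ≤ (p : ℝ≥0)⁻¹ := by
  refine ciSup_le fun i => ?_
  match i with
  | 0 => simp [teichCoeff, hz, trivialNorm]
  | (k+1) =>
    calc (p : ℝ≥0)⁻¹ ^ (k+1) * trivialNorm (teichCoeff p z (k+1))
        ≤ (p : ℝ≥0)⁻¹ ^ (k+1) * 1 := by gcongr; exact trivialNorm_le_one _
      _ ≤ (p : ℝ≥0)⁻¹ := by
          rw [mul_one, pow_succ']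
          calc (p:ℝ≥0)⁻¹ * (p:ℝ≥0)⁻¹ ^ k ≤ (p:ℝ≥0)⁻¹ * 1 := by
                gcongr; exact pow_le_one₀ zero_le (pinv_le_one p)
            _ = _ := mul_one _

lemma padicNormWitt_teichmuller (x : R) :
    padicNormWitt p (WittVector.teichmuller p x) = trivialNorm x := by
  apply le_antisymm
  · refine ciSup_le fun i => ?_
    match i with
    | 0 => simp [teichCoeff, WittVector.teichmuller_coeff_zero]
    | (k+1) =>
      simp [teichCoeff, WittVector.teichmuller_coeff_pos p x (k+1) (Nat.succ_pos k),
        trivialNorm]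
  · have h := le_ciSup (f := fun i : ℕ =>
      (p : ℝ≥0)⁻¹ ^ i * trivialNorm (teichCoeff p (WittVector.teichmuller p x) i)) ?_ 0
    · rw [padicNormWitt]
      simpa only [pow_zero, one_mul, teichCoeff, Function.iterate_zero, id_eq,
        WittVector.teichmuller_coeff_zero] using h
    · refine ⟨1, ?_⟩
      rintro y ⟨i, rfl⟩
      calc (p : ℝ≥0)⁻¹ ^ i * trivialNorm _ ≤ 1 * 1 := by
            gcongr
            · exact pow_le_one₀ zero_le (pinv_le_one p)
            · exact trivialNorm_le_one _
        _ = 1 := mul_one 1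

end Aux

section Main
variable (p : ℕ) [Fact p.Prime] {R : Type*} [CommRing R] [ExpChar R p] [PerfectRing R p]
  (β : WittVector p R → ℝ≥0) (hβ : IsMultSeminorm β)
  (hβb : ∀ x : WittVector p R, β x ≤ padicNormWitt p x)
include hβ

omit [ExpChar R p] [PerfectRing R p] in
lemma beta_pow (x : WittVector p R) (n : ℕ) : β (x ^ n) = β x ^ n := by
  induction n with
  | zero => simpa using hβ.2.2.1
  | succ k ih => rw [pow_succ, hβ.2.2.2, ih, pow_succ]

lemma mu_frob (x : R) :
    muSeminorm p β x = muSeminorm p β ((frobeniusEquiv R p).symm x) ^ p := by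
  have h1 : (WittVector.teichmuller p ((frobeniusEquiv R p).symm x)) ^ p
      = WittVector.teichmuller p x := by
    rw [← map_pow, frobeniusEquiv_symm_pow_p]
  rw [muSeminorm, muSeminorm, ← beta_pow p β hβ, h1]

lemma mu_frob_iter (x : R) (n : ℕ) :
    muSeminorm p β x
      = muSeminorm p β ((⇑(frobeniusEquiv R p).symm)^[n] x) ^ (p ^ n) := by
  induction n generalizing x with
  | zero => simp
  | succ k ih =>
    rw [ih x, mu_frob p β hβ ((⇑(frobeniusEquiv R p).symm)^[k] x), ← pow_mul,
      ← Function.iterate_succ_apply' (⇑(frobeniusEquiv R p).symm) k x, pow_succ']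

include hβb in
lemma mu_step (g h : R) :
    muSeminorm p β (g - h)
      ≤ max (max (muSeminorm p β g) (muSeminorm p β h)) (p : ℝ≥0)⁻¹ := by
  set t := WittVector.teichmuller p g - WittVector.teichmuller p h with ht
  set z := WittVector.teichmuller p (g - h) - t with hz
  have hzc : z.coeff 0 = 0 := by
    show WittVector.constantCoeff z = 0
    rw [hz, ht, map_sub (WittVector.constantCoeff), map_sub (WittVector.constantCoeff)]
    simp [WittVector.constantCoeff_apply, WittVector.teichmuller_coeff_zero]
  have hβz : β z ≤ (p : ℝ≥0)⁻¹ := (hβb z).trans (padicNormWitt_le_pinv p z hzc)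
  have hβnz : β (-z) ≤ (p : ℝ≥0)⁻¹ := by
    have : β (0 - z) ≤ max (β 0) (β z) := hβ.2.1 0 z
    simpa [hβ.1] using this.trans (max_le (by simp [hβ.1, hβz]) hβz)
  have key : WittVector.teichmuller p (g - h) = t - (-z) := by rw [hz]; ring
  calc muSeminorm p β (g - h) = β (t - (-z)) := by rw [muSeminorm, key]
    _ ≤ max (β t) (β (-z)) := hβ.2.1 t (-z)
    _ ≤ max (max (muSeminorm p β g) (muSeminorm p β h)) (p : ℝ≥0)⁻¹ := by
        apply max_le_max _ hβnz
        exact hβ.2.1 _ _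

omit hβ in
lemma limit_aux (A M : ℝ≥0) (hp : (p:ℝ≥0)⁻¹ ≤ 1)
    (h : ∀ n : ℕ, A ≤ max M ((p : ℝ≥0)⁻¹ ^ (p ^ n))) : A ≤ M := by
  by_contra hc
  push_neg at hc
  have hA : ∀ n : ℕ, A ≤ (p : ℝ≥0)⁻¹ ^ n := by
    intro n
    have h1 := h n
    have h2 : A ≤ (p : ℝ≥0)⁻¹ ^ (p ^ n) := by
      rcases max_cases M ((p : ℝ≥0)⁻¹ ^ (p ^ n)) with ⟨he, _⟩ | ⟨he, _⟩
      · exact absurd (h1.trans_eq he) (not_le.mpr hc)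
      · exact h1.trans_eq he
    exact h2.trans (pow_le_pow_of_le_one zero_le hp
      (Nat.le_of_lt (Nat.lt_pow_self (Fact.out : p.Prime).one_lt : n < p ^ n)))
  have hlt : (p : ℝ≥0)⁻¹ < 1 := by
    have : (1 : ℝ≥0) < p := by exact_mod_cast (Fact.out : p.Prime).one_lt
    exact inv_lt_one_of_one_lt₀ this
  have htend := NNReal.tendsto_pow_atTop_nhds_zero_of_lt_one hlt
  have : A ≤ 0 := ge_of_tendsto htend (Filter.Eventually.of_forall hA)
  exact absurd (le_trans this (zero_le : (0:ℝ≥0) ≤ M)) (not_le.mpr hc)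

end Main

section Final
variable (p : ℕ) [Fact p.Prime] {R : Type*} [CommRing R] [ExpChar R p] [PerfectRing R p]

lemma frob_symm_iter_sub (n : ℕ) (g h : R) :
    (⇑(frobeniusEquiv R p).symm)^[n] (g - h)
      = (⇑(frobeniusEquiv R p).symm)^[n] g - (⇑(frobeniusEquiv R p).symm)^[n] h := by
  induction n with
  | zero => simp
  | succ k ih =>
    rw [Function.iterate_succ_apply', Function.iterate_succ_apply',
      Function.iterate_succ_apply', ih, map_sub]

end Final

theorem muSeminorm_isMultSeminorm (p : ℕ) [Fact p.Prime] {R : Type*}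
    [CommRing R] [ExpChar R p] [PerfectRing R p]
    (β : WittVector p R → ℝ≥0) (hβ : IsMultSeminorm β)
    (hβb : ∀ x : WittVector p R, β x ≤ padicNormWitt p x) :
    IsMultSeminorm (muSeminorm p β) ∧ ∀ r : R, muSeminorm p β r ≤ trivialNorm r := by
  refine ⟨⟨?_, ?_, ?_, ?_⟩, ?_⟩
  · rw [muSeminorm, WittVector.teichmuller_zero, hβ.1]
  · intro g h
    refine limit_aux p _ _ (pinv_le_one p) fun n => ?_
    have hmono : Monotone (fun a : ℝ≥0 => a ^ (p ^ n)) :=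
      fun a b hab => pow_le_pow_left₀ zero_le hab _
    calc muSeminorm p β (g - h)
        = muSeminorm p β ((⇑(frobeniusEquiv R p).symm)^[n] (g - h)) ^ (p ^ n) :=
          mu_frob_iter p β hβ (g - h) n
      _ = muSeminorm p β ((⇑(frobeniusEquiv R p).symm)^[n] g
            - (⇑(frobeniusEquiv R p).symm)^[n] h) ^ (p ^ n) := by
          rw [frob_symm_iter_sub]
      _ ≤ (max (max (muSeminorm p β ((⇑(frobeniusEquiv R p).symm)^[n] g))
            (muSeminorm p β ((⇑(frobeniusEquiv R p).symm)^[n] h))) (p : ℝ≥0)⁻¹) ^ (p ^ n) :=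
          hmono (mu_step p β hβ hβb _ _)
      _ = max (max (muSeminorm p β ((⇑(frobeniusEquiv R p).symm)^[n] g) ^ (p ^ n))
            (muSeminorm p β ((⇑(frobeniusEquiv R p).symm)^[n] h) ^ (p ^ n)))
            ((p : ℝ≥0)⁻¹ ^ (p ^ n)) := by
          rw [Monotone.map_max hmono, Monotone.map_max hmono]
      _ = max (max (muSeminorm p β g) (muSeminorm p β h)) ((p : ℝ≥0)⁻¹ ^ (p ^ n)) := by
          rw [← mu_frob_iter p β hβ g n, ← mu_frob_iter p β hβ h n]
  · rw [muSeminorm, map_one, hβ.2.2.1]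
  · intro g h
    rw [muSeminorm, muSeminorm, muSeminorm, map_mul, hβ.2.2.2]
  · intro r
    exact (hβb _).trans_eq (padicNormWitt_teichmuller p r)
end

section
/- Let p be a prime and R a perfect 𝔽_p-algebra with the trivial norm, and let W(R) carry the normalized p-adic norm. For any multiplicative seminorm β on W(R) bounded above by the p-adic norm, we have (λ ∘ μ)(β) ≥ β pointwise; that is, for every x ∈ W(R), λ(μ(β))(x) ≥ β(x). -/
open scoped NNReal

section Aux

open WittVector Function

variable {p : ℕ} [hp : Fact p.Prime] {R : Type*} [CommRing R]

lemma auxCharP [ExpChar R p] : CharP R p := by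
  obtain h | h := ‹ExpChar R p›
  · exact absurd hp.out (by norm_num)
  · assumption

variable [ExpChar R p]

lemma aux_pow_p_mul (z : WittVector p R) (n : ℕ) :
    (p : WittVector p R) ^ n * z = verschiebung^[n] (frobenius^[n] z) := by
  haveI := auxCharP (p := p) (R := R)
  induction n with
  | zero => simp
  | succ n ih =>
    have hc : frobenius (verschiebung^[n] (frobenius^[n] z) : WittVector p R)
        = verschiebung^[n] (frobenius (frobenius^[n] z)) :=
      (verschiebung_frobenius_comm.symm.iterate_right n) _
    calc (p : WittVector p R) ^ (n+1) * z = ((p : WittVector p R) ^ n * z) * p := by ring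
    _ = verschiebung (frobenius (verschiebung^[n] (frobenius^[n] z))) := by
        rw [ih, verschiebung_frobenius]
    _ = verschiebung^[n+1] (frobenius^[n+1] z) := by
        rw [hc, ← iterate_succ_apply' verschiebung, ← iterate_succ_apply' frobenius]

lemma aux_iter_versch_coeff (y : WittVector p R) (n i : ℕ) (h : i < n) :
    (verschiebung^[n] y).coeff i = 0 := by
  induction n generalizing i with
  | zero => omega
  | succ n ih =>
    rw [iterate_succ_apply']
    cases i with
    | zero => exact verschiebung_coeff_zero _
    | succ i => rw [verschiebung_coeff_succ]; exact ih i (by omega)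

lemma aux_pow_p_mul_coeff_lt (z : WittVector p R) {n i : ℕ} (h : i < n) :
    ((p : WittVector p R) ^ n * z).coeff i = 0 := by
  rw [aux_pow_p_mul]; exact aux_iter_versch_coeff _ n i h

lemma aux_pow_p_mul_coeff_self (z : WittVector p R) (n : ℕ) :
    ((p : WittVector p R) ^ n * z).coeff n = z.coeff 0 ^ p ^ n := by
  haveI := auxCharP (p := p) (R := R)
  have h := iterate_verschiebung_coeff ((frobenius^[n] z : WittVector p R)) n 0
  rw [Nat.zero_add] at h
  rw [aux_pow_p_mul, h, iterate_frobenius_coeff]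

lemma aux_exists_pow_p_mul [PerfectRing R p] (y : WittVector p R) (n : ℕ)
    (h : ∀ i < n, y.coeff i = 0) :
    ∃ z, y = (p : WittVector p R) ^ n * z := by
  haveI := auxCharP (p := p) (R := R)
  obtain ⟨z, hz⟩ := ((frobenius_bijective p R).surjective.iterate n) (y.shift n)
  exact ⟨z, by rw [aux_pow_p_mul, hz, ← eq_iterate_verschiebung h]⟩

lemma aux_coeff_eq_of_sub (a b : WittVector p R) (n : ℕ)
    (h : ∀ i < n, (a - b).coeff i = 0) {i : ℕ} (hi : i < n) : a.coeff i = b.coeff i := by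
  have ht : WittVector.truncate n a = WittVector.truncate n b := by
    rw [← sub_eq_zero, ← map_sub]
    ext j
    rw [WittVector.coeff_truncate]
    simpa using h j j.2
  have := congrArg (fun t => TruncatedWittVector.coeff (⟨i, hi⟩ : Fin n) t) ht
  simpa [WittVector.coeff_truncate] using this

lemma aux_term_coeff (d : R) (i j : ℕ) :
    ((p : WittVector p R) ^ i * teichmuller p d).coeff j
      = if j = i then d ^ p ^ i else 0 := by
  haveI := auxCharP (p := p) (R := R)
  rcases lt_trichotomy j i with h | h | h
  · rw [if_neg h.ne, aux_pow_p_mul_coeff_lt _ h]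
  · subst h
    rw [if_pos rfl, aux_pow_p_mul_coeff_self, teichmuller_coeff_zero]
  · rw [if_neg h.ne', aux_pow_p_mul]
    obtain ⟨k, rfl⟩ : ∃ k, j = (k + 1) + i := ⟨j - i - 1, by omega⟩
    rw [iterate_verschiebung_coeff, iterate_frobenius_coeff,
      teichmuller_coeff_pos p d (k + 1) k.succ_pos, zero_pow (pow_ne_zero _ hp.out.ne_zero)]

lemma aux_sum_coeff (d : ℕ → R) (m : ℕ) : ∀ j,
    ((∑ i ∈ Finset.range m, (p : WittVector p R) ^ i * teichmuller p (d i)).coeff j)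
      = if j < m then d j ^ p ^ j else 0 := by
  induction m with
  | zero => simp
  | succ m ih =>
    intro j
    rw [Finset.sum_range_succ, coeff_add_of_disjoint j _ _ (fun k => by
      rcases eq_or_ne k m with rfl | hk
      · left; rw [ih, if_neg (lt_irrefl _)]
      · right; rw [aux_term_coeff, if_neg hk]), ih, aux_term_coeff]
    rcases lt_trichotomy j m with h | h | h
    · rw [if_pos h, if_neg h.ne, if_pos (by omega), add_zero]
    · subst h
      rw [if_neg (lt_irrefl _), if_pos rfl, if_pos (by omega), zero_add]
    · rw [if_neg (by omega), if_neg (by omega), if_neg (by omega), add_zero]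

lemma aux_frobEquiv_symm_iterate [PerfectRing R p] (c : R) (n : ℕ) :
    (⇑(_root_.frobeniusEquiv R p).symm)^[n] (c ^ p ^ n) = c := by
  induction n with
  | zero => simp
  | succ n ih =>
    have h1 : (_root_.frobeniusEquiv R p).symm ((c ^ p ^ n) ^ p) = c ^ p ^ n := by
      rw [← frobenius_def]; exact frobeniusEquiv_symm_apply_frobenius R p _
    rw [pow_succ, pow_mul, iterate_succ_apply, h1, ih]

end Aux
section Decomp

open WittVector Function

variable {p : ℕ} [hp : Fact p.Prime] {R : Type*} [CommRing R] [ExpChar R p] [PerfectRing R p]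

lemma aux_decomp (x : WittVector p R) (n : ℕ) :
    ∃ z : WittVector p R,
      x = (∑ i ∈ Finset.range n,
            (p : WittVector p R) ^ i * teichmuller p (teichCoeff p x i))
          + (p : WittVector p R) ^ n * z := by
  induction n with
  | zero => exact ⟨x, by simp⟩
  | succ n ih =>
    obtain ⟨z, hz⟩ := ih
    set c := z.coeff 0 with hc
    obtain ⟨z', hz'⟩ := aux_exists_pow_p_mul (z - teichmuller p c) 1 (by
      intro i hi
      interval_cases i
      have : WittVector.constantCoeff (z - teichmuller p c) = 0 := by
        rw [map_sub]
        simp [WittVector.constantCoeff_apply, teichmuller_coeff_zero, hc]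
      simpa [WittVector.constantCoeff_apply] using this)
    rw [pow_one] at hz'
    have hzz : z = teichmuller p c + (p : WittVector p R) * z' := by
      rw [← hz']; ring
    set S := ∑ i ∈ Finset.range n,
      (p : WittVector p R) ^ i * teichmuller p (teichCoeff p x i) with hS
    have hxS : x - (S + (p : WittVector p R) ^ n * teichmuller p c)
        = (p : WittVector p R) ^ (n + 1) * z' := by
      rw [hz, hzz]; ring
    have hcoeff : x.coeff n = c ^ p ^ n := by
      have h1 : ∀ i < n + 1,
          (x - (S + (p : WittVector p R) ^ n * teichmuller p c)).coeff i = 0 := by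
        rw [hxS]; intro i hi; exact aux_pow_p_mul_coeff_lt _ hi
      have h2 := aux_coeff_eq_of_sub _ _ _ h1 (Nat.lt_succ_self n)
      rw [coeff_add_of_disjoint n _ _ (fun k => by
        rcases eq_or_ne k n with rfl | hk
        · left; rw [hS, aux_sum_coeff, if_neg (lt_irrefl _)]
        · right; rw [aux_term_coeff, if_neg hk])] at h2
      rw [hS, aux_sum_coeff, if_neg (lt_irrefl _), aux_term_coeff, if_pos rfl,
        zero_add] at h2
      exact h2
    have htc : teichCoeff p x n = c := by
      rw [teichCoeff, hcoeff]; exact aux_frobEquiv_symm_iterate c n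
    refine ⟨z', ?_⟩
    rw [Finset.sum_range_succ, htc, ← hS, hz, hzz]
    ring

end Decomp

theorem lambda_comp_mu_ge_id (p : ℕ) [Fact p.Prime] {R : Type*}
    [CommRing R] [ExpChar R p] [PerfectRing R p]
    (β : WittVector p R → ℝ≥0) (hβ : IsMultSeminorm β)
    (hβb : ∀ x : WittVector p R, β x ≤ padicNormWitt p x) :
    ∀ x : WittVector p R, β x ≤ lambdaSeminorm p (muSeminorm p β) x := by
  classical
  obtain ⟨h0, hsub, h1, hmul⟩ := hβ
  haveI := auxCharP (p := p) (R := R)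
  have hp' : Fact p.Prime := ‹_›
  have hneg : ∀ a, β (-a) = β a := by
    intro a
    have ha : β (-a) ≤ β a := by simpa [h0] using hsub 0 a
    have hb : β a ≤ β (-a) := by simpa [h0] using hsub 0 (-a)
    exact le_antisymm ha hb
  have hadd : ∀ a b, β (a + b) ≤ max (β a) (β b) := by
    intro a b
    have := hsub a (-b)
    rwa [sub_neg_eq_add, hneg] at this
  have hpow : ∀ (a : WittVector p R) (n : ℕ), β (a ^ n) = β a ^ n := by
    intro a n
    induction n with
    | zero => simpa using h1
    | succ n ih => rw [pow_succ, hmul, ih, pow_succ]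
  have hp1 : (1 : ℝ≥0) < (p : ℝ≥0) := by exact_mod_cast hp'.out.one_lt
  have hpinv : (p : ℝ≥0)⁻¹ ≤ 1 := by
    rw [inv_le_one_iff₀]; right; exact hp1.le
  have htriv : ∀ r : R, trivialNorm r ≤ 1 := by
    intro r; unfold trivialNorm; split <;> simp
  have hball : ∀ y : WittVector p R, β y ≤ 1 := by
    intro y
    refine (hβb y).trans (ciSup_le fun i => ?_)
    calc (p : ℝ≥0)⁻¹ ^ i * trivialNorm (teichCoeff p y i)
        ≤ (p : ℝ≥0)⁻¹ ^ i * 1 := mul_le_mul_right (htriv _) _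
      _ ≤ 1 := by rw [mul_one]; exact pow_le_one' hpinv i
  have hp_le : β ((p : ℕ) : WittVector p R) ≤ (p : ℝ≥0)⁻¹ := by
    refine (hβb _).trans (ciSup_le fun i => ?_)
    cases i with
    | zero =>
      have h00 : teichCoeff p ((p : ℕ) : WittVector p R) 0 = 0 := by
        simp [teichCoeff, WittVector.coeff_p_zero]
      simp [h00, trivialNorm]
    | succ i =>
      calc (p : ℝ≥0)⁻¹ ^ (i + 1) * trivialNorm (teichCoeff p ((p : ℕ) : WittVector p R) (i + 1))
          ≤ (p : ℝ≥0)⁻¹ ^ (i + 1) * 1 := mul_le_mul_right (htriv _) _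
        _ = (p : ℝ≥0)⁻¹ ^ i * (p : ℝ≥0)⁻¹ := by rw [mul_one, pow_succ]
        _ ≤ 1 * (p : ℝ≥0)⁻¹ := mul_le_mul_left (pow_le_one' hpinv i) _
        _ = (p : ℝ≥0)⁻¹ := one_mul _
  intro x
  set L := lambdaSeminorm p (muSeminorm p β) x with hL
  have hbdd : BddAbove (Set.range fun i : ℕ =>
      (p : ℝ≥0)⁻¹ ^ i * muSeminorm p β (teichCoeff p x i)) := by
    refine ⟨1, ?_⟩
    rintro _ ⟨i, rfl⟩
    calc (p : ℝ≥0)⁻¹ ^ i * muSeminorm p β (teichCoeff p x i)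
        ≤ (p : ℝ≥0)⁻¹ ^ i * 1 := mul_le_mul_right (hball _) _
      _ ≤ 1 := by rw [mul_one]; exact pow_le_one' hpinv i
  have hterm : ∀ i : ℕ,
      (p : ℝ≥0)⁻¹ ^ i * β (WittVector.teichmuller p (teichCoeff p x i)) ≤ L :=
    fun i => le_ciSup hbdd i
  have hkey : ∀ n : ℕ, β x ≤ max L ((p : ℝ≥0)⁻¹ ^ n) := by
    intro n
    obtain ⟨z, hz⟩ := aux_decomp x n
    have hSsum : ∀ m : ℕ, β (∑ i ∈ Finset.range m,
        (p : WittVector p R) ^ i * WittVector.teichmuller p (teichCoeff p x i)) ≤ L := by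
      intro m
      induction m with
      | zero => simp [h0]
      | succ m ih =>
        rw [Finset.sum_range_succ]
        refine (hadd _ _).trans (max_le ih ?_)
        calc β ((p : WittVector p R) ^ m * WittVector.teichmuller p (teichCoeff p x m))
            = β ((p : WittVector p R) ^ m) * β (WittVector.teichmuller p (teichCoeff p x m)) :=
              hmul _ _
          _ = β ((p : ℕ) : WittVector p R) ^ m * β (WittVector.teichmuller p (teichCoeff p x m)) := by
              rw [hpow]
          _ ≤ (p : ℝ≥0)⁻¹ ^ m * β (WittVector.teichmuller p (teichCoeff p x m)) :=
              mul_le_mul_left (pow_le_pow_left' hp_le m) _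
          _ ≤ L := hterm m
    have hz' : β ((p : WittVector p R) ^ n * z) ≤ (p : ℝ≥0)⁻¹ ^ n := by
      rw [hmul, hpow]
      calc β ((p : ℕ) : WittVector p R) ^ n * β z
          ≤ (p : ℝ≥0)⁻¹ ^ n * 1 := mul_le_mul' (pow_le_pow_left' hp_le n) (hball z)
        _ = (p : ℝ≥0)⁻¹ ^ n := mul_one _
    calc β x = β (_ + (p : WittVector p R) ^ n * z) := by rw [← hz]
      _ ≤ max (β _) (β ((p : WittVector p R) ^ n * z)) := hadd _ _
      _ ≤ max L ((p : ℝ≥0)⁻¹ ^ n) := max_le_max (hSsum n) hz'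
  by_contra hcon
  push_neg at hcon
  have hpos : 0 < β x := lt_of_le_of_lt (zero_le : (0:ℝ≥0) ≤ L) hcon
  have hlt1 : (p : ℝ≥0)⁻¹ < 1 := by
    rw [inv_lt_one_iff₀]; right; exact hp1
  obtain ⟨n, hn⟩ := exists_pow_lt_of_lt_one hpos hlt1
  rcases le_max_iff.mp (hkey n) with h | h
  · exact absurd h (not_le.mpr hcon)
  · exact absurd h (not_le.mpr hn)
end

section
/- Let p be a prime and R a perfect 𝔽_p-algebra with the trivial norm, and let W(R) carry the normalized p-adic norm. Then the map λ : ℳ(R) → ℳ(W(R)), sending a multiplicative seminorm α bounded by the trivial norm to the seminorm λ(α)(∑ p^i [x_i]) = sup_i p^{−i} α(x_i), is continuous for the topologies of pointwise convergence on ℳ(R) and ℳ(W(R)). -/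
open scoped NNReal

/-- The Gel'fand spectrum of `R` with the trivial norm, topologized by
pointwise convergence. -/
def SpectrumTrivial (R : Type*) [CommRing R] : Type _ :=
  {α : R → ℝ≥0 // IsMultSeminorm α ∧ ∀ r : R, α r ≤ trivialNorm r}

instance (R : Type*) [CommRing R] : TopologicalSpace (SpectrumTrivial R) :=
  instTopologicalSpaceSubtype

theorem lambda_continuous (p : ℕ) [Fact p.Prime] {R : Type*}
    [CommRing R] [ExpChar R p] [PerfectRing R p] :
    Continuous (fun α : SpectrumTrivial R =>
      (fun x : WittVector p R => lambdaSeminorm p α.1 x)) := by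
  apply continuous_pi
  intro x
  set c : ℕ → R := teichCoeff p x with hc
  set t : SpectrumTrivial R → ℕ → ℝ≥0 :=
    fun α i => (p : ℝ≥0)⁻¹ ^ i * α.1 (c i) with ht
  have hp1 : (p : ℝ≥0)⁻¹ ≤ 1 := by
    rw [inv_le_one_iff₀]
    right
    exact_mod_cast (Fact.out : p.Prime).one_lt.le
  have hbound : ∀ α i, t α i ≤ (p : ℝ≥0)⁻¹ ^ i := by
    intro α i
    calc t α i ≤ (p : ℝ≥0)⁻¹ ^ i * 1 := by
          refine mul_le_mul_right ?_ _
          refine le_trans (α.2.2 (c i)) ?_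
          unfold trivialNorm
          split <;> simp
      _ = (p : ℝ≥0)⁻¹ ^ i := mul_one _
  have hbdd : ∀ α, BddAbove (Set.range (t α)) := by
    intro α
    refine ⟨1, ?_⟩
    rintro _ ⟨i, rfl⟩
    exact le_trans (hbound α i) (pow_le_one₀ zero_le hp1)
  set F : ℕ → SpectrumTrivial R → ℝ≥0 :=
    fun n α => (Finset.range (n + 1)).sup (t α) with hF
  have hFle : ∀ n α, F n α ≤ lambdaSeminorm p α.1 x := by
    intro n α
    exact Finset.sup_le fun i _ => le_ciSup (hbdd α) i
  have hleF : ∀ n α, lambdaSeminorm p α.1 x ≤ F n α + (p : ℝ≥0)⁻¹ ^ (n + 1) := by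
    intro n α
    refine ciSup_le fun i => ?_
    by_cases h : i ≤ n
    · exact le_trans (Finset.le_sup (f := t α) (Finset.mem_range.2 (Nat.lt_succ_of_le h)))
        le_self_add
    · refine le_trans (hbound α i) (le_add_left ?_)
      exact pow_le_pow_of_le_one zero_le hp1 (Nat.succ_le_of_lt (not_le.1 h))
  have hunif : TendstoUniformly F (fun α => lambdaSeminorm p α.1 x) Filter.atTop := by
    rw [Metric.tendstoUniformly_iff]
    intro ε hε
    have hplt : (p : ℝ)⁻¹ < 1 := by
      rw [inv_lt_one_iff₀]
      right
      exact_mod_cast (Fact.out : p.Prime).one_lt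
    have htend : Filter.Tendsto (fun n : ℕ => ((p : ℝ)⁻¹) ^ (n + 1)) Filter.atTop (nhds 0) :=
      (tendsto_pow_atTop_nhds_zero_of_lt_one (by positivity) hplt).comp
        (Filter.tendsto_add_atTop_nat 1)
    filter_upwards [htend.eventually (gt_mem_nhds hε)] with n hn α
    rw [NNReal.dist_eq]
    have h1 : (F n α : ℝ) ≤ lambdaSeminorm p α.1 x := hFle n α
    have h2 : (lambdaSeminorm p α.1 x : ℝ) ≤ F n α + (p : ℝ)⁻¹ ^ (n + 1) := by
      have := hleF n α
      exact_mod_cast this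
    rw [abs_of_nonneg (by linarith)]
    have : ((p : ℝ)⁻¹) ^ (n + 1) < ε := hn
    linarith
  refine hunif.continuous (Filter.Frequently.of_forall fun n => ?_)
  exact Continuous.finset_sup_apply fun i _ =>
    (continuous_const.mul ((continuous_apply (c i)).comp continuous_subtype_val))
end

section
/- Let p be a prime and R a perfect 𝔽_p-algebra. Let x ∈ W(R) and let r ∈ R be the 0-th Witt coordinate of x (so x ≡ [r] mod p). If for every positive integer n there exists y ∈ W(R) with y^{p^n} = x, then x = [r]. That is, the Teichmüller lift [r] is the unique lift of r to W(R) admitting p^n-th roots for all positive integers n. -/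
open WittVector

private lemma aux_sub_coeff_zero (p : ℕ) [Fact p.Prime] {R : Type*} [CommRing R]
    (x y : WittVector p R) : (x - y).coeff 0 = x.coeff 0 - y.coeff 0 := by
  have h := WittVector.ghostComponent_apply (p := p) 0 (x - y)
  have hx := WittVector.ghostComponent_apply (p := p) 0 x
  have hy := WittVector.ghostComponent_apply (p := p) 0 y
  simp [wittPolynomial_zero, MvPolynomial.aeval_X] at h hx hy
  rw [hx, hy] at h
  exact h.symm

private lemma aux_p_pow_mul_coeff (p : ℕ) [hp : Fact p.Prime] {R : Type*}
    [CommRing R] [CharP R p] (v : WittVector p R) (n i : ℕ) (hi : i < n) :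
    ((p : WittVector p R) ^ n * v).coeff i = 0 := by
  induction n generalizing v i with
  | zero => omega
  | succ n ih =>
    have h : (p : WittVector p R) ^ (n + 1) * v = ((p : WittVector p R) ^ n * v) * p := by
      ring
    rw [h]
    cases i with
    | zero => exact WittVector.mul_charP_coeff_zero _
    | succ i =>
      rw [WittVector.mul_charP_coeff_succ, ih v i (by omega), zero_pow hp.out.ne_zero]

private lemma aux_dvd_of_coeff_zero (p : ℕ) [hp : Fact p.Prime] {R : Type*}
    [CommRing R] [CharP R p] [PerfectRing R p] (z : WittVector p R)
    (hz : z.coeff 0 = 0) : (p : WittVector p R) ∣ z := by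
  set w : WittVector p R := WittVector.mk p (fun n => z.coeff (n + 1)) with hw
  have hzv : z = WittVector.verschiebung w := by
    ext i
    cases i with
    | zero => rw [WittVector.verschiebung_coeff_zero, hz]
    | succ i => rw [WittVector.verschiebung_coeff_succ]; rfl
  refine ⟨(WittVector.frobeniusEquiv p R).symm w, ?_⟩
  have := WittVector.verschiebung_frobenius ((WittVector.frobeniusEquiv p R).symm w)
  rw [show WittVector.frobenius ((WittVector.frobeniusEquiv p R).symm w) = w from
    (WittVector.frobeniusEquiv p R).apply_symm_apply w] at this
  rw [hzv, mul_comm]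
  exact this

theorem eq_teichmuller_of_p_pow_roots (p : ℕ) [Fact p.Prime] {R : Type*}
    [CommRing R] [CharP R p] [ExpChar R p] [PerfectRing R p]
    (x : WittVector p R)
    (hroots : ∀ n : ℕ, 0 < n → ∃ y : WittVector p R, y ^ p ^ n = x) :
    x = WittVector.teichmuller p (x.coeff 0) := by
  have key : ∀ n : ℕ, (p : WittVector p R) ^ (n + 1) ∣
      (x - WittVector.teichmuller p (x.coeff 0)) := by
    intro n
    obtain ⟨y, hy⟩ := hroots (n + 1) (Nat.succ_pos n)
    have h1 : (p : WittVector p R) ∣ y - WittVector.teichmuller p (y.coeff 0) := by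
      apply aux_dvd_of_coeff_zero
      rw [aux_sub_coeff_zero, WittVector.teichmuller_coeff_zero, sub_self]
    have h2 := dvd_sub_pow_of_dvd_sub h1 (n + 1)
    rw [← map_pow, hy] at h2
    have hcast : ((p : ℕ) : WittVector p R) = (p : WittVector p R) := by norm_cast
    rw [hcast] at h2
    have hc0 : x.coeff 0 = (y.coeff 0) ^ p ^ (n + 1) := by
      obtain ⟨v, hv⟩ := h2
      have h0 : (x - WittVector.teichmuller p (y.coeff 0 ^ p ^ (n + 1))).coeff 0 = 0 := by
        rw [hv]; exact aux_p_pow_mul_coeff p v (n + 2) 0 (by omega)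
      rwa [aux_sub_coeff_zero, WittVector.teichmuller_coeff_zero, sub_eq_zero] at h0
    rw [hc0]
    calc (p : WittVector p R) ^ (n + 1) ∣ (p : WittVector p R) ^ (n + 1 + 1) :=
          pow_dvd_pow _ (by omega)
      _ ∣ x - WittVector.teichmuller p (y.coeff 0 ^ p ^ (n + 1)) := h2
  have hz : ∀ i, (x - WittVector.teichmuller p (x.coeff 0)).coeff i = 0 := by
    intro i
    obtain ⟨v, hv⟩ := key i
    rw [hv]
    exact aux_p_pow_mul_coeff p v (i + 1) i (by omega)
  have h0 : x - WittVector.teichmuller p (x.coeff 0) = 0 := by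
    ext i; rw [hz i, WittVector.zero_coeff]
  exact sub_eq_zero.mp h0
end
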